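/- arXiv:0707.1733 — 2 statements merged into one kernel-verified Lean document; each statement's English description precedes it below -/
import Mathlib

section
/- Assume R is a field. For each λ ∈ Λ^+, the restriction to S^p of the irreducible S(Λ)-module L^λ contains an S^p-submodule isomorphic to L_p^{(λ,0)}. -/
/-!
Common framework for the formalization of results of Shoji–Wada,
"Cyclotomic q-Schur algebras associated to the Ariki-Koike algebra".
-/

open scoped BigOperators TensorProduct
open MulOpposite

noncomputable section

/-! ## Multicompositions -/

/-- An `r`-multicomposition of `n`, whose `k`-th component is a composition
of length `≤ m k`. -/
structure MultiComp (n r : ℕ) (m : Fin r → ℕ) where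
  part : (k : Fin r) → Fin (m k) → ℕ
  sum_eq : (∑ k, ∑ i, part k i) = n

namespace MultiComp

variable {n r : ℕ} {m : Fin r → ℕ}

theorem part_injective : Function.Injective (part : MultiComp n r m → _) := by
  rintro ⟨a, _⟩ ⟨b, _⟩ h
  simpa using h

instance : DecidableEq (MultiComp n r m) := fun a b =>
  decidable_of_iff (a.part = b.part) part_injective.eq_iff

theorem part_le_n (lam : MultiComp n r m) (k : Fin r) (i : Fin (m k)) :
    lam.part k i ≤ n := by
  calc lam.part k i ≤ ∑ i, lam.part k i :=
        Finset.single_le_sum (fun _ _ => Nat.zero_le _) (Finset.mem_univ i)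
    _ ≤ ∑ k, ∑ i, lam.part k i :=
        Finset.single_le_sum (f := fun k => ∑ i, lam.part k i)
          (fun _ _ => Nat.zero_le _) (Finset.mem_univ k)
    _ = n := lam.sum_eq

instance : Fintype (MultiComp n r m) :=
  Fintype.ofInjective
    (fun lam (k : Fin r) (i : Fin (m k)) =>
      (⟨lam.part k i, Nat.lt_succ_of_le (part_le_n lam k i)⟩ : Fin (n + 1)))
    (fun a b h => part_injective (by
      funext k i
      exact congrArg Fin.val (congrFun (congrFun h k) i)))

/-- an `r`-multipartition: every component is weakly decreasing -/
def IsPartition (lam : MultiComp n r m) : Prop :=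
  ∀ (k : Fin r) (i j : Fin (m k)), i ≤ j → lam.part k j ≤ lam.part k i

instance (lam : MultiComp n r m) : Decidable lam.IsPartition := by
  unfold IsPartition; infer_instance

/-- the size `|λ^{(k)}|` of the `k`-th component -/
def compSize (lam : MultiComp n r m) (k : Fin r) : ℕ := ∑ i, lam.part k i

/-- the dominance order `λ ⊵ μ` on multicompositions -/
def Dominates (lam mu : MultiComp n r m) : Prop :=
  ∀ (k : Fin r) (i : Fin (m k)),
    ((∑ c ∈ Finset.univ.filter fun c => c < k, mu.compSize c) +
        ∑ j ∈ Finset.univ.filter fun j => j ≤ i, mu.part k j) ≤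
      (∑ c ∈ Finset.univ.filter fun c => c < k, lam.compSize c) +
        ∑ j ∈ Finset.univ.filter fun j => j ≤ i, lam.part k j

/-- the strict dominance order `λ ⊳ μ` -/
def SDominates (lam mu : MultiComp n r m) : Prop :=
  Dominates lam mu ∧ lam ≠ mu

end MultiComp

/-- `Λ` is a saturated set of multicompositions: it contains every multipartition
dominating one of its members. -/
def Saturated {n r : ℕ} {m : Fin r → ℕ} (Λ : Finset (MultiComp n r m)) : Prop :=
  ∀ lam : MultiComp n r m, lam.IsPartition →
    (∃ mu ∈ Λ, MultiComp.Dominates lam mu) → lam ∈ Λ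

/-! ## Tableaux -/

/-- the set of entries `(i,k)` (row `i` of component `k`) for tableaux -/
abbrev MCEntry (r : ℕ) (m : Fin r → ℕ) := Σ k : Fin r, Fin (m k)

/-- the total order on entries: `(i₁,k₁) ≤ (i₂,k₂)` iff `k₁ < k₂`, or `k₁ = k₂` and
`i₁ ≤ i₂`. -/
def entryLE {r : ℕ} {m : Fin r → ℕ} (a b : MCEntry r m) : Prop :=
  a.1 < b.1 ∨ (a.1 = b.1 ∧ (a.2 : ℕ) ≤ (b.2 : ℕ))

/-- the associated strict order on entries -/
def entryLT {r : ℕ} {m : Fin r → ℕ} (a b : MCEntry r m) : Prop :=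
  a.1 < b.1 ∨ (a.1 = b.1 ∧ (a.2 : ℕ) < (b.2 : ℕ))

/-- the cells `(k, i, j)` (component `k`, row `i`, column `j`) of the Young diagram
of a multicomposition -/
abbrev MultiComp.Cell {n r : ℕ} {m : Fin r → ℕ} (lam : MultiComp n r m) :=
  Σ (k : Fin r) (i : Fin (m k)), Fin (lam.part k i)

/-- Semistandard tableaux of shape `lam` and type `mu` in the sense of
Dipper–James–Mathas: rows weakly increase, columns strictly increase, the entries of
the `k`-th component have second coordinate `≥ k`, and for each entry `(i,k)` the
number of cells carrying it equals `mu.part k i`. -/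
structure SSTab {n r : ℕ} {m : Fin r → ℕ} (lam mu : MultiComp n r m) where
  entry : lam.Cell → MCEntry r m
  rowWeak : ∀ (k : Fin r) (i : Fin (m k)) (j j' : Fin (lam.part k i)),
    j ≤ j' → entryLE (entry ⟨k, i, j⟩) (entry ⟨k, i, j'⟩)
  colStrict : ∀ (k : Fin r) (i i' : Fin (m k)) (j : ℕ)
    (hj : j < lam.part k i) (hj' : j < lam.part k i'), i < i' →
    entryLT (entry ⟨k, i, ⟨j, hj⟩⟩) (entry ⟨k, i', ⟨j, hj'⟩⟩)
  compLE : ∀ c : lam.Cell, c.1 ≤ (entry c).1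
  typeCount : ∀ e : MCEntry r m,
    mu.part e.1 e.2 = Fintype.card {c : lam.Cell // entry c = e}

namespace SSTab

variable {n r : ℕ} {m : Fin r → ℕ} {lam mu : MultiComp n r m}

theorem entry_injective : Function.Injective (entry : SSTab lam mu → _) := by
  rintro ⟨a, _, _, _, _⟩ ⟨b, _, _, _, _⟩ h
  simpa using h

instance : Fintype (SSTab lam mu) := Fintype.ofInjective entry entry_injective

instance : DecidableEq (SSTab lam mu) := fun a b =>
  decidable_of_iff (a.entry = b.entry) entry_injective.eq_iff

end SSTab

/-- Standard tableaux of shape `lam`: bijective fillings of the diagram by the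
letters `1, …, n`, increasing along rows and down columns. -/
structure StdTab {n r : ℕ} {m : Fin r → ℕ} (lam : MultiComp n r m) where
  entry : lam.Cell → Fin n
  bij : Function.Bijective entry
  rowStrict : ∀ (k : Fin r) (i : Fin (m k)) (j j' : Fin (lam.part k i)),
    j < j' → entry ⟨k, i, j⟩ < entry ⟨k, i, j'⟩
  colStrict : ∀ (k : Fin r) (i i' : Fin (m k)) (j : ℕ)
    (hj : j < lam.part k i) (hj' : j < lam.part k i'), i < i' →
    entry ⟨k, i, ⟨j, hj⟩⟩ < entry ⟨k, i', ⟨j, hj'⟩⟩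

namespace StdTab

variable {n r : ℕ} {m : Fin r → ℕ} {lam : MultiComp n r m}

theorem entry_injective : Function.Injective (entry : StdTab lam → _) := by
  rintro ⟨a, _, _, _⟩ ⟨b, _, _, _⟩ h
  simpa using h

instance : Fintype (StdTab lam) := Fintype.ofInjective entry entry_injective

end StdTab
/-! ## The block structure attached to `p = (r₁, …, r_g)` -/

/-- componentwise comparison of vectors in `ℤ_{≥0}^g` -/
def vecLE {g : ℕ} (f h : Fin g → ℕ) : Prop := ∀ b, f b ≤ h b

instance {g : ℕ} (f h : Fin g → ℕ) : Decidable (vecLE f h) := by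
  unfold vecLE; infer_instance

/-- strict componentwise comparison: `f ≤ h` componentwise and `f ≠ h` -/
def vecLT {g : ℕ} (f h : Fin g → ℕ) : Prop := vecLE f h ∧ f ≠ h

instance {g : ℕ} (f h : Fin g → ℕ) : Decidable (vecLT f h) := by
  unfold vecLT; infer_instance

/-- The datum of `p = (r₁, …, r_g)`, encoded by the map sending a component
`k ∈ {1, …, r}` to its block: the fibers of `π` are the intervals
`{p_b + 1, …, p_b + r_b}`, of sizes `r_b > 0`. -/
structure BlockCtx (r g : ℕ) where
  π : Fin r → Fin g
  mono : Monotone π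
  surj : Function.Surjective π

namespace BlockCtx

variable {r g : ℕ} (P : BlockCtx r g) {n : ℕ} {m : Fin r → ℕ}

/-- `α_p(μ) = (n₁, …, n_g)`, `n_b = |μ^{[b]}|` -/
def alphaP (mu : MultiComp n r m) : Fin g → ℕ := fun b =>
  ∑ k ∈ Finset.univ.filter fun k => P.π k = b, mu.compSize k

/-- `a_p(μ) = (a₁, …, a_g)`, `a_b = n₁ + ⋯ + n_{b-1}` -/
def aP (mu : MultiComp n r m) : Fin g → ℕ := fun b =>
  ∑ k ∈ Finset.univ.filter fun k => P.π k < b, mu.compSize k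

/-- `r_b`, the number of components in block `b` -/
def rblk (b : Fin g) : ℕ := (Finset.univ.filter fun k => P.π k = b).card

/-- the components in block `b`, listed in increasing order -/
def blkEquiv (b : Fin g) :
    Fin (P.rblk b) ≃o {x // x ∈ Finset.univ.filter fun k => P.π k = b} :=
  (Finset.univ.filter fun k => P.π k = b).orderIsoOfFin rfl

/-- `m^{[b]}`, the row bounds of block `b` -/
def mblk (m : Fin r → ℕ) (b : Fin g) : Fin (P.rblk b) → ℕ :=
  fun i => m ((P.blkEquiv b i : {x // x ∈ Finset.univ.filter fun k => P.π k = b}) : Fin r)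

/-- the block component `μ^{[b]}` of a multicomposition, an `r_b`-multicomposition
of `n_b = α_p(μ)_b` -/
def restrictTo (mu : MultiComp n r m) (b : Fin g) (nb : ℕ)
    (h : P.alphaP mu b = nb) : MultiComp nb (P.rblk b) (P.mblk m b) where
  part := fun k i => mu.part ((P.blkEquiv b k :
    {x // x ∈ Finset.univ.filter fun k => P.π k = b}) : Fin r) i
  sum_eq := by
    subst h
    calc (∑ k : Fin (P.rblk b), ∑ i, mu.part ((P.blkEquiv b k :
            {x // x ∈ Finset.univ.filter fun k => P.π k = b}) : Fin r) i)
        = ∑ x : {x // x ∈ Finset.univ.filter fun k => P.π k = b},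
            mu.compSize (x : Fin r) :=
          Fintype.sum_equiv (P.blkEquiv b).toEquiv _ _ (fun _ => rfl)
      _ = ∑ k ∈ Finset.univ.filter fun k => P.π k = b, mu.compSize k :=
          Finset.sum_coe_sort _ _
      _ = P.alphaP mu b := rfl

theorem restrictTo_isPartition (mu : MultiComp n r m) (hmu : mu.IsPartition)
    (b : Fin g) (nb : ℕ) (h : P.alphaP mu b = nb) :
    (P.restrictTo mu b nb h).IsPartition :=
  fun k i j hij => hmu _ i j hij

/-- the largest component index in block `b` (that is, `p_b + r_b`) -/
def blockLast (b : Fin g) : Fin r :=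
  (Finset.univ.filter fun k => P.π k = b).max' (by
    obtain ⟨k, hk⟩ := P.surj b
    exact ⟨k, Finset.mem_filter.2 ⟨Finset.mem_univ _, hk⟩⟩)

end BlockCtx
/-! ## The cyclotomic q-Schur algebra with its Dipper–James–Mathas cellular basis -/

/-- the multicompositions belonging to `Λ` -/
abbrev LamS {n r : ℕ} {m : Fin r → ℕ} (Λ : Finset (MultiComp n r m)) := {x // x ∈ Λ}

/-- `Λ⁺`, the multipartitions belonging to `Λ` -/
abbrev LamP {n r : ℕ} {m : Fin r → ℕ} (Λ : Finset (MultiComp n r m)) :=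
  {x : MultiComp n r m // x ∈ Λ ∧ x.IsPartition}

/-- the index set of the Dipper–James–Mathas cellular basis
`{φ_{S,T} : S ∈ T₀(λ,μ), T ∈ T₀(λ,ν), λ ∈ Λ⁺, μ, ν ∈ Λ}` -/
abbrev DJMIndex {n r : ℕ} {m : Fin r → ℕ} (Λ : Finset (MultiComp n r m)) :=
  Σ (lam : LamP Λ) (mu : LamS Λ) (nu : LamS Λ), SSTab lam.1 mu.1 × SSTab lam.1 nu.1

/-- Abstract datum of the cyclotomic q-Schur algebra `S(Λ) = End_H(⊕_{μ∈Λ} M^μ)`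
together with its Dipper–James–Mathas cellular basis `φ_{S,T}`
(`bas ⟨λ, μ, ν, (S, T)⟩` is the basis element `φ_{S,T} ∈ Hom_H(M^ν, M^μ)` for
`S ∈ T₀(λ,μ)`, `T ∈ T₀(λ,ν)`), with its cellular anti-automorphism `*`
(`astar`), and the orthogonal idempotents `φ_μ = id_{M^μ}` (`phiId`). -/
structure SchurAlgebra (R : Type) [CommRing R] {n r : ℕ} {m : Fin r → ℕ}
    (Λ : Finset (MultiComp n r m)) where
  carrier : Type
  [ringI : Ring carrier]
  [algI : Algebra R carrier]
  bas : Module.Basis (DJMIndex Λ) R carrier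
  astar : carrier →ₗ[R] carrier
  astar_mul : ∀ x y : carrier, astar (x * y) = astar y * astar x
  astar_bas : ∀ (lam : LamP Λ) (mu nu : LamS Λ)
    (S : SSTab lam.1 mu.1) (T : SSTab lam.1 nu.1),
    astar (bas ⟨lam, mu, nu, (S, T)⟩) = bas ⟨lam, nu, mu, (T, S)⟩
  phiId : LamS Λ → carrier
  phiId_sum : ∑ mu : LamS Λ, phiId mu = 1
  phiId_mul : ∀ mu nu : LamS Λ, phiId mu * phiId nu = if mu = nu then phiId mu else 0
  phiId_mul_bas : ∀ (lam : LamP Λ) (mu nu : LamS Λ) (S : SSTab lam.1 mu.1)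
    (T : SSTab lam.1 nu.1) (rho : LamS Λ),
    phiId rho * bas ⟨lam, mu, nu, (S, T)⟩ =
      if rho = mu then bas ⟨lam, mu, nu, (S, T)⟩ else 0
  bas_mul_phiId : ∀ (lam : LamP Λ) (mu nu : LamS Λ) (S : SSTab lam.1 mu.1)
    (T : SSTab lam.1 nu.1) (rho : LamS Λ),
    bas ⟨lam, mu, nu, (S, T)⟩ * phiId rho =
      if rho = nu then bas ⟨lam, mu, nu, (S, T)⟩ else 0
  cellular : ∀ (a : carrier) (lam : LamP Λ) (mu : LamS Λ) (S : SSTab lam.1 mu.1),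
    ∃ c : (Σ mu' : LamS Λ, SSTab lam.1 mu'.1) → R,
      ∀ (nu : LamS Λ) (T : SSTab lam.1 nu.1),
        a * bas ⟨lam, mu, nu, (S, T)⟩ -
            ∑ x : Σ mu' : LamS Λ, SSTab lam.1 mu'.1,
              c x • bas ⟨lam, x.1, nu, (x.2, T)⟩ ∈
          Submodule.span R
            {y : carrier | ∃ (lam' : LamP Λ) (mu' nu' : LamS Λ)
              (S' : SSTab lam'.1 mu'.1) (T' : SSTab lam'.1 nu'.1),
              MultiComp.SDominates lam'.1 lam.1 ∧
              y = bas ⟨lam', mu', nu', (S', T')⟩}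

namespace SchurAlgebra

variable {R : Type} [CommRing R] {n r : ℕ} {m : Fin r → ℕ}
variable {Λ : Finset (MultiComp n r m)}

instance (SA : SchurAlgebra R Λ) : Ring SA.carrier := SA.ringI
instance (SA : SchurAlgebra R Λ) : Algebra R SA.carrier := SA.algI

/-- the two-sided ideal `S(Λ)^{∨λ}`, spanned by the `φ_{S,T}` of shape strictly
dominating `λ` -/
def SVee (SA : SchurAlgebra R Λ) (lam : LamP Λ) : Submodule R SA.carrier :=
  Submodule.span R
    {y : SA.carrier | ∃ (lam' : LamP Λ) (mu' nu' : LamS Λ)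
      (S' : SSTab lam'.1 mu'.1) (T' : SSTab lam'.1 nu'.1),
      MultiComp.SDominates lam'.1 lam.1 ∧ y = SA.bas ⟨lam', mu', nu', (S', T')⟩}

end SchurAlgebra

/-! ## The parabolic subalgebra `S^p` and its combinatorics -/

section PLayer

variable {R : Type} [CommRing R] {n r g : ℕ} {m : Fin r → ℕ}
variable {Λ : Finset (MultiComp n r m)}

/-- a semistandard tableau of shape `λ` together with its type `μ`,
i.e. an element of `T₀(λ) = ⋃_{μ ∈ Λ} T₀(λ,μ)` -/
abbrev TabOf (Λ : Finset (MultiComp n r m)) (lam : LamP Λ) :=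
  Σ mu : LamS Λ, SSTab lam.1 mu.1

/-- the condition defining `T₀^p(λ,μ) ⊆ T₀(λ,μ)`: `a_p(λ) = a_p(μ)` -/
def pCond (P : BlockCtx r g) (lam : LamP Λ) (x : TabOf Λ lam) : Prop :=
  P.aP x.1.1 = P.aP lam.1

instance (P : BlockCtx r g) (lam : LamP Λ) (x : TabOf Λ lam) :
    Decidable (pCond P lam x) := by
  unfold pCond; infer_instance

/-- `T₀^p(λ)`, the tableaux whose type has the same `a_p` as the shape -/
abbrev PTab (P : BlockCtx r g) (lam : LamP Λ) := {x : TabOf Λ lam // pCond P lam x}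

/-- `x` is the canonical tableau `T^λ = λ(t^λ)` of shape and type `λ` -/
def IsCanonical (lam : LamP Λ) (x : TabOf Λ lam) : Prop :=
  x.1.1 = lam.1 ∧ ∀ c : lam.1.Cell, x.2.entry c = ⟨c.1, c.2.1⟩

namespace SchurAlgebra

/-- the subset `Z^p` of the cellular basis: those `φ_{S,T}` with `S ∈ T₀(λ,μ)`,
`T ∈ T₀(λ,ν)` such that `a_p(λ) > a_p(μ)` whenever `α_p(μ) ≠ α_p(ν)` -/
def ZpSet (SA : SchurAlgebra R Λ) (P : BlockCtx r g) : Set SA.carrier :=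
  {x | ∃ (lam : LamP Λ) (mu nu : LamS Λ) (S : SSTab lam.1 mu.1) (T : SSTab lam.1 nu.1),
    (P.alphaP mu.1 ≠ P.alphaP nu.1 → vecLT (P.aP mu.1) (P.aP lam.1)) ∧
    x = SA.bas ⟨lam, mu, nu, (S, T)⟩}

/-- the subset `Z^p \ {φ_{S,T} : S, T ∈ T₀^p(λ)}` spanning the two-sided ideal
`\hat S^p` of `S^p` -/
def ZpHatSet (SA : SchurAlgebra R Λ) (P : BlockCtx r g) : Set SA.carrier :=
  {x | ∃ (lam : LamP Λ) (mu nu : LamS Λ) (S : SSTab lam.1 mu.1) (T : SSTab lam.1 nu.1),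
    (P.alphaP mu.1 ≠ P.alphaP nu.1 → vecLT (P.aP mu.1) (P.aP lam.1)) ∧
    ¬(P.aP mu.1 = P.aP lam.1 ∧ P.aP nu.1 = P.aP lam.1) ∧
    x = SA.bas ⟨lam, mu, nu, (S, T)⟩}

end SchurAlgebra

/-- the index set `Σ^p ⊆ Λ⁺ × {0,1}`, where `(λ,1)` is kept only if there exists
`μ ∈ Λ` with `a_p(λ) > a_p(μ)` and `T₀(λ,μ) ≠ ∅` -/
def SigmaPIdx (Λ : Finset (MultiComp n r m)) (P : BlockCtx r g) :=
  {e : LamP Λ × Bool // e.2 = true →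
    ∃ mu : LamS Λ, vecLT (P.aP mu.1) (P.aP e.1.1) ∧ Nonempty (SSTab e.1.1 mu.1)}

/-- the partial order on `Σ^p`: `(λ₁,ε₁) > (λ₂,ε₂)` iff `λ₁ ⊳ λ₂`, or `λ₁ = λ₂`
and `ε₁ > ε₂` -/
def sigmaGT (P : BlockCtx r g) (e f : SigmaPIdx Λ P) : Prop :=
  MultiComp.SDominates e.1.1.1 f.1.1.1 ∨
    (e.1.1 = f.1.1 ∧ e.1.2 = true ∧ f.1.2 = false)

/-- the element `(λ, 0)` of `Σ^p` -/
def eZero (P : BlockCtx r g) (lam : LamP Λ) : SigmaPIdx Λ P :=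
  ⟨(lam, false), fun h => (Bool.false_ne_true h).elim⟩

/-- the index set `I^p(ε)`: `T₀^p(λ)` for `ε = (λ,0)`, and
`⋃ {T₀(λ,μ) : a_p(λ) > a_p(μ)}` for `ε = (λ,1)` -/
def pIp (P : BlockCtx r g) (e : SigmaPIdx Λ P) : Set (TabOf Λ e.1.1) :=
  {x | (e.1.2 = true ∧ vecLT (P.aP x.1.1) (P.aP e.1.1.1)) ∨
       (e.1.2 = false ∧ pCond P e.1.1 x)}

/-- the index set `J^p(ε)`: `T₀^p(λ)` for `ε = (λ,0)`, and `T₀(λ)` for `ε = (λ,1)` -/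
def pJp (P : BlockCtx r g) (e : SigmaPIdx Λ P) : Set (TabOf Λ e.1.1) :=
  {x | e.1.2 = true ∨ pCond P e.1.1 x}

instance (P : BlockCtx r g) (e : SigmaPIdx Λ P) :
    DecidablePred (· ∈ pIp (Λ := Λ) P e) := fun x =>
  decidable_of_iff ((e.1.2 = true ∧ vecLT (P.aP x.1.1) (P.aP e.1.1.1)) ∨
    (e.1.2 = false ∧ pCond P e.1.1 x)) Iff.rfl

instance (P : BlockCtx r g) (e : SigmaPIdx Λ P) :
    DecidablePred (· ∈ pJp (Λ := Λ) P e) := fun x =>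
  decidable_of_iff (e.1.2 = true ∨ pCond P e.1.1 x) Iff.rfl

namespace SchurAlgebra

/-- the set `Z^p(ε) = {φ_{S,T} : S ∈ I^p(ε), T ∈ J^p(ε)}` -/
def ZpAt (SA : SchurAlgebra R Λ) (P : BlockCtx r g) (e : SigmaPIdx Λ P) :
    Set SA.carrier :=
  {x | ∃ S ∈ pIp P e, ∃ T ∈ pJp P e, x = SA.bas ⟨e.1.1, S.1, T.1, (S.2, T.2)⟩}

/-- the ideal `(S^p)^{∨ε}`, spanned by the `Z^p(ε')` for `ε' > ε` -/
def SpVee (SA : SchurAlgebra R Λ) (P : BlockCtx r g) (e : SigmaPIdx Λ P) :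
    Submodule R SA.carrier :=
  Submodule.span R (⋃ e' : {f : SigmaPIdx Λ P // sigmaGT P f e}, SA.ZpAt P e'.1)

end SchurAlgebra

end PLayer
/-! ## Based right modules and composition multiplicities -/

/-- a right `A`-module which is free as an `R`-module with a distinguished basis
indexed by `ι`; right `A`-modules are treated as left `Aᵐᵒᵖ`-modules -/
structure BasedRightModule (R : Type) [CommRing R] (A : Type) [Ring A]
    [Algebra R A] (ι : Type) where
  M : Type
  [abGrp : AddCommGroup M]
  [modR : Module R M]
  [modA : Module Aᵐᵒᵖ M]
  [tower : IsScalarTower R Aᵐᵒᵖ M]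
  bas : Module.Basis ι R M

namespace BasedRightModule

variable {R : Type} [CommRing R] {A : Type} [Ring A] [Algebra R A] {ι : Type}

instance (X : BasedRightModule R A ι) : AddCommGroup X.M := X.abGrp
instance (X : BasedRightModule R A ι) : Module R X.M := X.modR
instance (X : BasedRightModule R A ι) : Module Aᵐᵒᵖ X.M := X.modA
instance (X : BasedRightModule R A ι) : IsScalarTower R Aᵐᵒᵖ X.M := X.tower

end BasedRightModule

/-- `N` is the radical of the bilinear form on the based module `X` whose Gram
matrix in the distinguished basis is `f` -/
def IsFormRadical {R : Type} [CommRing R] {A : Type} [Ring A] [Algebra R A]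
    {ι : Type} [Fintype ι] (X : BasedRightModule R A ι) (f : ι → ι → R)
    (N : Submodule Aᵐᵒᵖ X.M) : Prop :=
  ∀ x : X.M, x ∈ N ↔ ∀ t : ι, (∑ s : ι, X.bas.repr x s * f s t) = 0

open Classical in
/-- the number of factors of the composition series `s` isomorphic to `L`: the
multiplicity `[M : L]` when `s` runs from `⊥` to `⊤` -/
noncomputable def factorMult {A : Type} [Ring A] {M : Type} [AddCommGroup M]
    [Module A M] (s : CompositionSeries (Submodule A M)) (L : Type)
    [AddCommGroup L] [Module A L] : ℕ :=
  (Finset.univ.filter fun i : Fin s.length =>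
    Nonempty ((↥(s i.succ) ⧸ Submodule.comap (s i.succ).subtype (s i.castSucc))
      ≃ₗ[A] L)).card

/-- a composition series of the full module: from `⊥` to `⊤` -/
def IsFullSeries {A : Type} [Ring A] {M : Type} [AddCommGroup M] [Module A M]
    (s : CompositionSeries (Submodule A M)) : Prop :=
  s.head = ⊥ ∧ s.last = ⊤
/-! ## The quotient algebra `\bar S^p` -/

section BarLayer

variable {R : Type} [CommRing R] {n r g : ℕ} {m : Fin r → ℕ}
variable {Λ : Finset (MultiComp n r m)}

/-- Abstract datum of the quotient algebra `\bar S^p = S^p / \hat S^p`: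
an `R`-algebra `B` together with the surjective projection `proj : S^p → B`,
whose kernel is the span of `Z^p \ {φ_{S,T} : S, T ∈ T₀^p(λ)}`, and the images
`\barφ_{S,T}` (`barphi`) of the basis elements, which form an `R`-basis of `B`. -/
structure BarSchurAlgebra {R : Type} [CommRing R] {n r : ℕ} {m : Fin r → ℕ}
    {Λ : Finset (MultiComp n r m)} {g : ℕ} (SA : SchurAlgebra R Λ)
    (P : BlockCtx r g) (Sp : Subalgebra R SA.carrier) where
  B : Type
  [ringB : Ring B]
  [algB : Algebra R B]
  proj : ↥Sp →ₐ[R] B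
  surj : Function.Surjective proj
  barphi : (lam : LamP Λ) → PTab P lam → PTab P lam → B
  bbas : Module.Basis (Σ lam : LamP Λ, PTab P lam × PTab P lam) R B
  bbas_eq : ∀ (lam : LamP Λ) (S T : PTab P lam), bbas ⟨lam, (S, T)⟩ = barphi lam S T
  proj_bas : ∀ (lam : LamP Λ) (mu nu : LamS Λ) (S : SSTab lam.1 mu.1)
    (T : SSTab lam.1 nu.1) (x : ↥Sp),
    (x : SA.carrier) = SA.bas ⟨lam, mu, nu, (S, T)⟩ →
    proj x = if h : pCond P lam ⟨mu, S⟩ ∧ pCond P lam ⟨nu, T⟩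
      then barphi lam ⟨⟨mu, S⟩, h.1⟩ ⟨⟨nu, T⟩, h.2⟩ else 0
  ker_char : ∀ x : ↥Sp, proj x = 0 ↔ (x : SA.carrier) ∈
    Submodule.span R (SA.ZpHatSet P)

namespace BarSchurAlgebra

variable {SA : SchurAlgebra R Λ} {P : BlockCtx r g} {Sp : Subalgebra R SA.carrier}

instance (BA : BarSchurAlgebra SA P Sp) : Ring BA.B := BA.ringB
instance (BA : BarSchurAlgebra SA P Sp) : Algebra R BA.B := BA.algB

/-- the two-sided ideal `(\bar S^p)^{∨λ}`, spanned by the `\barφ_{S,T}` of shape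
strictly dominating `λ` -/
def BarVee (BA : BarSchurAlgebra SA P Sp) (lam : LamP Λ) : Submodule R BA.B :=
  Submodule.span R {y : BA.B | ∃ (lam' : LamP Λ) (S T : PTab P lam'),
    MultiComp.SDominates lam'.1 lam.1 ∧ y = BA.barphi lam' S T}

end BarSchurAlgebra

/-! ## Characterizations of the various Weyl modules -/

namespace SchurAlgebra

/-- `W` is the Weyl module `W^λ` of `S(Λ)`: its basis `{φ_T}` is indexed by
`T₀(λ)` and the right action is the one inherited from multiplication in
`S(Λ)` modulo `S(Λ)^{∨λ}`. -/
def IsWeylModule (SA : SchurAlgebra R Λ) (lam : LamP Λ)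
    (W : BasedRightModule R SA.carrier (TabOf Λ lam)) : Prop :=
  ∀ (S T : TabOf Λ lam) (a : SA.carrier),
    SA.bas ⟨lam, S.1, T.1, (S.2, T.2)⟩ * a -
        ∑ T' : TabOf Λ lam, (W.bas.repr (MulOpposite.op a • W.bas T) T') •
          SA.bas ⟨lam, S.1, T'.1, (S.2, T'.2)⟩ ∈ SA.SVee lam

/-- `f` is the canonical bilinear form of the Weyl module `W^λ`, determined by
`φ_{T^λ,S} φ_{T,T^λ} ≡ ⟨φ_S, φ_T⟩ φ_{T^λ,T^λ} mod S(Λ)^{∨λ}`; here `tc` is the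
canonical tableau `T^λ`. -/
def IsWeylForm (SA : SchurAlgebra R Λ) (lam : LamP Λ) (tc : TabOf Λ lam)
    (f : TabOf Λ lam → TabOf Λ lam → R) : Prop :=
  ∀ S T : TabOf Λ lam,
    SA.bas ⟨lam, tc.1, S.1, (tc.2, S.2)⟩ * SA.bas ⟨lam, T.1, tc.1, (T.2, tc.2)⟩ -
      f S T • SA.bas ⟨lam, tc.1, tc.1, (tc.2, tc.2)⟩ ∈ SA.SVee lam

/-- `Z` is the standard right `S^p`-module `Z_p^ε` attached to `ε ∈ Σ^p`: its
basis `{φ_T^ε}` is indexed by `J^p(ε)` and the right `S^p`-action is inherited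
from multiplication in `S^p` modulo `(S^p)^{∨ε}`. -/
def IsZpModule (SA : SchurAlgebra R Λ) (P : BlockCtx r g)
    (Sp : Subalgebra R SA.carrier) (e : SigmaPIdx Λ P)
    (Z : BasedRightModule R ↥Sp {x : TabOf Λ e.1.1 // x ∈ pJp P e}) : Prop :=
  ∀ (S : {x : TabOf Λ e.1.1 // x ∈ pIp P e})
    (T : {x : TabOf Λ e.1.1 // x ∈ pJp P e}) (a : ↥Sp),
    SA.bas ⟨e.1.1, S.1.1, T.1.1, (S.1.2, T.1.2)⟩ * (a : SA.carrier) -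
        ∑ T' : {x : TabOf Λ e.1.1 // x ∈ pJp P e},
          (Z.bas.repr (MulOpposite.op a • Z.bas T) T') •
            SA.bas ⟨e.1.1, S.1.1, T'.1.1, (S.1.2, T'.1.2)⟩ ∈ SA.SpVee P e

/-- `f` is the canonical bilinear pairing `β_ε` between `◇Z_p^ε` and `Z_p^ε`,
determined by `φ_{U,T} φ_{S,V} ≡ β_ε(φ_S^ε, φ_T^ε) φ_{U,V} mod (S^p)^{∨ε}`. -/
def IsBetaForm (SA : SchurAlgebra R Λ) (P : BlockCtx r g) (e : SigmaPIdx Λ P)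
    (f : {x : TabOf Λ e.1.1 // x ∈ pIp P e} →
      {x : TabOf Λ e.1.1 // x ∈ pJp P e} → R) : Prop :=
  ∀ (U : {x : TabOf Λ e.1.1 // x ∈ pIp P e})
    (T : {x : TabOf Λ e.1.1 // x ∈ pJp P e})
    (S : {x : TabOf Λ e.1.1 // x ∈ pIp P e})
    (V : {x : TabOf Λ e.1.1 // x ∈ pJp P e}),
    SA.bas ⟨e.1.1, U.1.1, T.1.1, (U.1.2, T.1.2)⟩ *
        SA.bas ⟨e.1.1, S.1.1, V.1.1, (S.1.2, V.1.2)⟩ -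
      f S T • SA.bas ⟨e.1.1, U.1.1, V.1.1, (U.1.2, V.1.2)⟩ ∈ SA.SpVee P e

/-- `N` is the radical `rad Z_p^ε` of the pairing `β_ε` (with Gram matrix `f`). -/
def IsBetaRadical (SA : SchurAlgebra R Λ) (P : BlockCtx r g)
    (Sp : Subalgebra R SA.carrier) (e : SigmaPIdx Λ P)
    (Z : BasedRightModule R ↥Sp {x : TabOf Λ e.1.1 // x ∈ pJp P e})
    (f : {x : TabOf Λ e.1.1 // x ∈ pIp P e} →
      {x : TabOf Λ e.1.1 // x ∈ pJp P e} → R)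
    (N : Submodule (↥Sp)ᵐᵒᵖ Z.M) : Prop :=
  ∀ y : Z.M, y ∈ N ↔ ∀ S : {x : TabOf Λ e.1.1 // x ∈ pIp P e},
    (∑ T : {x : TabOf Λ e.1.1 // x ∈ pJp P e}, Z.bas.repr y T * f S T) = 0

end SchurAlgebra

namespace BarSchurAlgebra

variable {SA : SchurAlgebra R Λ} {P : BlockCtx r g} {Sp : Subalgebra R SA.carrier}

/-- `Z` is the Weyl (cell) module `\bar Z_p^λ` of the cellular algebra `\bar S^p`:
its basis `{\barφ_T}` is indexed by `T₀^p(λ)` and the right action is inherited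
from multiplication in `\bar S^p` modulo `(\bar S^p)^{∨λ}`. -/
def IsBarWeyl (BA : BarSchurAlgebra SA P Sp) (lam : LamP Λ)
    (Z : BasedRightModule R BA.B (PTab P lam)) : Prop :=
  ∀ (S T : PTab P lam) (b : BA.B),
    BA.barphi lam S T * b - ∑ T' : PTab P lam,
        (Z.bas.repr (MulOpposite.op b • Z.bas T) T') • BA.barphi lam S T' ∈
      BA.BarVee lam

/-- `f` is the canonical symmetric bilinear form `⟨·,·⟩_p` on `\bar Z_p^λ`,
determined by `\barφ_{T^λ,S} \barφ_{T,T^λ} ≡ ⟨\barφ_S, \barφ_T⟩_p \barφ_{T^λ,T^λ}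
mod (\bar S^p)^{∨λ}`; `tc` is the canonical tableau `T^λ`. -/
def IsBarForm (BA : BarSchurAlgebra SA P Sp) (lam : LamP Λ) (tc : PTab P lam)
    (f : PTab P lam → PTab P lam → R) : Prop :=
  ∀ S T : PTab P lam,
    BA.barphi lam tc S * BA.barphi lam T tc - f S T • BA.barphi lam tc tc ∈
      BA.BarVee lam

end BarSchurAlgebra

end BarLayer
/-! ## The Ariki–Koike algebra -/

/-- the defining relations of the Ariki–Koike algebra `H_{n,r}` on the generators
`T_0, T_1, …, T_{n-1}` (generator `i : Fin n` is `T_i`) -/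
inductive ArikiKoikeRel (R : Type) [CommRing R] (n r : ℕ) (q : Rˣ) (Q : Fin r → R) :
    FreeAlgebra R (Fin n) → FreeAlgebra R (Fin n) → Prop
  | cyclotomic (h : 0 < n) :
      ArikiKoikeRel R n r q Q
        (((List.finRange r).map fun j =>
          FreeAlgebra.ι R (⟨0, h⟩ : Fin n) - algebraMap R _ (Q j)).prod) 0
  | quadratic (i : Fin n) (hi : i.1 ≠ 0) :
      ArikiKoikeRel R n r q Q
        ((FreeAlgebra.ι R i - algebraMap R _ (q : R)) *
          (FreeAlgebra.ι R i + algebraMap R _ ((q⁻¹ : Rˣ) : R))) 0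
  | braid0 (h : 1 < n) :
      ArikiKoikeRel R n r q Q
        (FreeAlgebra.ι R (⟨0, Nat.lt_of_lt_of_le Nat.zero_lt_one h.le⟩ : Fin n) *
          FreeAlgebra.ι R (⟨1, h⟩ : Fin n) *
          FreeAlgebra.ι R (⟨0, Nat.lt_of_lt_of_le Nat.zero_lt_one h.le⟩ : Fin n) *
          FreeAlgebra.ι R (⟨1, h⟩ : Fin n))
        (FreeAlgebra.ι R (⟨1, h⟩ : Fin n) *
          FreeAlgebra.ι R (⟨0, Nat.lt_of_lt_of_le Nat.zero_lt_one h.le⟩ : Fin n) *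
          FreeAlgebra.ι R (⟨1, h⟩ : Fin n) *
          FreeAlgebra.ι R (⟨0, Nat.lt_of_lt_of_le Nat.zero_lt_one h.le⟩ : Fin n))
  | braid (i j : Fin n) (hi : i.1 ≠ 0) (hij : j.1 = i.1 + 1) :
      ArikiKoikeRel R n r q Q
        (FreeAlgebra.ι R i * FreeAlgebra.ι R j * FreeAlgebra.ι R i)
        (FreeAlgebra.ι R j * FreeAlgebra.ι R i * FreeAlgebra.ι R j)
  | comm (i j : Fin n) (hij : i.1 + 1 < j.1) :
      ArikiKoikeRel R n r q Q
        (FreeAlgebra.ι R i * FreeAlgebra.ι R j)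
        (FreeAlgebra.ι R j * FreeAlgebra.ι R i)

/-- the Ariki–Koike algebra `H_{n,r}` over `R` with parameters
`q, Q_1, …, Q_r` (with `q` invertible) -/
abbrev ArikiKoike (R : Type) [CommRing R] (n r : ℕ) (q : Rˣ) (Q : Fin r → R) :=
  RingQuot (ArikiKoikeRel R n r q Q)

/-! ## Corners `e·B·e` at an idempotent -/

/-- an idempotent element of a ring -/
structure IdemElem (B : Type) [Ring B] where
  e : B
  idem : e * e = e

/-- the corner `{x : B | e x e = x}` of `B` at the idempotent `e`;
for `e = \barφ_Ω` this is the modified Ariki–Koike algebra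
`\bar H^p = \barφ_Ω ⬝ \bar S^p ⬝ \barφ_Ω` of type `p` -/
def Corner {B : Type} [Ring B] (E : IdemElem B) := {x : B // E.e * x * E.e = x}

namespace Corner

variable {B : Type} [Ring B] {E : IdemElem B}

instance : Add (Corner E) :=
  ⟨fun x y => ⟨x.1 + y.1, by rw [mul_add, add_mul, x.2, y.2]⟩⟩

instance : Mul (Corner E) :=
  ⟨fun x y => ⟨x.1 * y.1, by
    have hx : E.e * x.1 = x.1 := by
      nth_rewrite 1 [← x.2]
      rw [← mul_assoc, ← mul_assoc, E.idem, x.2]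
    have hy : y.1 * E.e = y.1 := by
      nth_rewrite 1 [← y.2]
      rw [mul_assoc, E.idem, y.2]
    rw [← mul_assoc, hx, mul_assoc, hy]⟩⟩

instance : Zero (Corner E) := ⟨⟨0, by simp⟩⟩

instance : Neg (Corner E) := ⟨fun x => ⟨-x.1, by rw [mul_neg, neg_mul, x.2]⟩⟩

/-- the identity element `e` of the corner -/
def one (E : IdemElem B) : Corner E :=
  ⟨E.e, by rw [E.idem, E.idem]⟩

instance {R : Type} [CommRing R] [Algebra R B] : SMul R (Corner E) :=
  ⟨fun c x => ⟨c • x.1, by rw [mul_smul_comm, smul_mul_assoc, x.2]⟩⟩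

@[simp] theorem add_val (x y : Corner E) : (x + y).1 = x.1 + y.1 := rfl
@[simp] theorem mul_val (x y : Corner E) : (x * y).1 = x.1 * y.1 := rfl
@[simp] theorem smul_val {R : Type} [CommRing R] [Algebra R B] (c : R)
    (x : Corner E) : (c • x).1 = c • x.1 := rfl

end Corner

/-! ## The set `Ω` and the blocks of compositions of `n` -/

section OmegaLayer

variable {n r g : ℕ} {m : Fin r → ℕ}

/-- `ω ∈ Ω`: all the entries of `ω` are `0` or `1`, for each letter
`1 ≤ i ≤ n` the `i`-th rows of the components of `ω` have total size `1`,
and all nonzero rows occur in components which are last in their `p`-block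
(this uses `m_k ≥ n` for all `k`). -/
def IsOmega (P : BlockCtx r g) (hm : ∀ k, n ≤ m k) (om : MultiComp n r m) : Prop :=
  (∀ (k : Fin r) (i : Fin (m k)), om.part k i ≤ 1) ∧
  (∀ i : Fin n,
    (∑ k : Fin r, om.part k ⟨i.1, Nat.lt_of_lt_of_le i.2 (hm k)⟩) = 1) ∧
  (∀ (k : Fin r) (i : Fin (m k)), om.part k i = 1 →
    ∀ k' : Fin r, P.π k' = P.π k → k' ≤ k)

instance (P : BlockCtx r g) (hm : ∀ k, n ≤ m k) (om : MultiComp n r m) :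
    Decidable (IsOmega P hm om) := by
  unfold IsOmega; infer_instance

/-- the set `D_{n,g}` of tuples `(n₁, …, n_g)` of non-negative integers summing
to `n` -/
def DComp (n g : ℕ) := {f : Fin g → ℕ // ∑ b, f b = n}

end OmegaLayer

/-! ## Auxiliary lemmas for Statement 10 -/

section Statement10Aux

variable {R : Type} [CommRing R]

lemma basisSpanReprZero {M ι : Type} [AddCommGroup M] [Module R M]
    (b : Module.Basis ι R M) (K : Set ι) {x : M}
    (hx : x ∈ Submodule.span R (⇑b '' K)) {i : ι} (hi : i ∉ K) :
    b.repr x i = 0 := by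
  have hle : Submodule.span R (⇑b '' K) ≤
      LinearMap.ker ((Finsupp.lapply i).comp (b.repr : M →ₗ[R] ι →₀ R)) := by
    rw [Submodule.span_le]
    rintro y ⟨j, hj, rfl⟩
    have hji : j ≠ i := fun h => hi (h ▸ hj)
    simp only [SetLike.mem_coe, LinearMap.mem_ker, LinearMap.coe_comp,
      Function.comp_apply, Finsupp.lapply_apply, LinearEquiv.coe_coe,
      Module.Basis.repr_self]
    exact Finsupp.single_eq_of_ne hji.symm
  simpa using hle hx

lemma opSmulComm {A M : Type} [Ring A] [Algebra R A] [AddCommGroup M]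
    [Module R M] [Module Aᵐᵒᵖ M] [IsScalarTower R Aᵐᵒᵖ M]
    (a : Aᵐᵒᵖ) (c : R) (x : M) : a • (c • x) = c • (a • x) := by
  rw [← algebraMap_smul Aᵐᵒᵖ c x, ← mul_smul, ← Algebra.commutes, mul_smul,
    algebraMap_smul]

lemma sumDiteSubtype {α β : Type} [Fintype α] [AddCommMonoid β] (p : α → Prop)
    [DecidablePred p] (f : ∀ x, p x → β) :
    (∑ x : α, if h : p x then f x h else 0) = ∑ x : {x // p x}, f x.1 x.2 := by
  rw [← Finset.sum_filter_of_ne (p := p) (fun x _ hx => by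
        by_contra hp; simp [dif_neg hp] at hx),
    Finset.sum_subtype (p := p) (Finset.univ.filter p) (fun x => by simp)
      (fun x => if h : p x then f x h else 0)]
  exact Finset.sum_congr rfl fun x _ => dif_pos x.2

/-- the set of "bad" basis indices for the coefficient-extraction arguments -/
def badSet {n r g : ℕ} {m : Fin r → ℕ} {Λ : Finset (MultiComp n r m)}
    (P : BlockCtx r g) (lam : LamP Λ) : Set (DJMIndex Λ) :=
  {i | i.1 ≠ lam ∨ P.aP i.2.1.1 ≠ P.aP lam.1}

/-- the indices `⟨λ, type(T^λ), type(t), (T^λ, t)⟩` -/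
def idxMap {n r : ℕ} {m : Fin r → ℕ} {Λ : Finset (MultiComp n r m)}
    (lam : LamP Λ) (tc : TabOf Λ lam) : TabOf Λ lam → DJMIndex Λ :=
  fun t => ⟨lam, tc.1, t.1, (tc.2, t.2)⟩

end Statement10Aux

/-! ## Statement 10 (Shoji–Wada, Lemma 3.10)

Over a field, for `λ ∈ Λ⁺`, the restriction to `S^p` of the irreducible
`S(Λ)`-module `L^λ` contains an `S^p`-submodule isomorphic to `L_p^{(λ,0)}`. -/

set_option maxHeartbeats 2000000 in
theorem Lp0_embeds_in_L
    {R : Type} [Field R] {n r g : ℕ} {m : Fin r → ℕ}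
    (hn : 0 < n) (hr : 0 < r) (hm : ∀ k, 0 < m k)
    {Λ : Finset (MultiComp n r m)} (hΛ : Saturated Λ)
    (SA : SchurAlgebra R Λ) (P : BlockCtx r g)
    (Sp : Subalgebra R SA.carrier)
    (hSp : (Sp : Set SA.carrier) =
      (Submodule.span R (SA.ZpSet P) : Submodule R SA.carrier))
    (lam : LamP Λ)
    -- `Z_p^{(λ,0)}`, the pairing `β_{(λ,0)}`, its radical, and `L_p^{(λ,0)}`
    (Z0 : BasedRightModule R ↥Sp {x : TabOf Λ lam // x ∈ pJp P (eZero P lam)})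
    (hZ0 : SA.IsZpModule P Sp (eZero P lam) Z0)
    (f0 : {x : TabOf Λ lam // x ∈ pIp P (eZero P lam)} →
      {x : TabOf Λ lam // x ∈ pJp P (eZero P lam)} → R)
    (hf0 : SA.IsBetaForm P (eZero P lam) f0)
    (N0 : Submodule (↥Sp)ᵐᵒᵖ Z0.M)
    (hN0 : SA.IsBetaRadical P Sp (eZero P lam) Z0 f0 N0)
    -- the Weyl module `W^λ`, its canonical form, `rad W^λ`, and `L^λ`
    (W : BasedRightModule R SA.carrier (TabOf Λ lam))
    (hW : SA.IsWeylModule lam W)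
    (tc : TabOf Λ lam) (htc : IsCanonical lam tc)
    (fW : TabOf Λ lam → TabOf Λ lam → R)
    (hfW : SA.IsWeylForm lam tc fW)
    (NW : Submodule SA.carrierᵐᵒᵖ W.M)
    (hNW : IsFormRadical W fW NW) :
    ∃ F : (Z0.M ⧸ N0) →ₗ[R] (W.M ⧸ NW), Function.Injective F ∧
      ∀ (a : ↥Sp) (x : Z0.M ⧸ N0),
        F (MulOpposite.op a • x) = MulOpposite.op (a : SA.carrier) • F x := by
  classical
  -- membership characterizations of `T₀^p(λ)` inside `I^p(λ,0)` and `J^p(λ,0)`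
  have memJ : ∀ x : TabOf Λ lam,
      x ∈ pJp P (eZero P lam) ↔ P.aP x.1.1 = P.aP lam.1 := by
    intro x
    constructor
    · rintro (h | h)
      · exact absurd h (by simp [eZero])
      · exact h
    · intro h; exact Or.inr h
  have memI : ∀ x : TabOf Λ lam,
      x ∈ pIp P (eZero P lam) ↔ P.aP x.1.1 = P.aP lam.1 := by
    intro x
    constructor
    · rintro (⟨h, -⟩ | ⟨-, h⟩)
      · exact absurd h (by simp [eZero])
      · exact h
    · intro h; exact Or.inr ⟨rfl, h⟩
  have htc1 : tc.1.1 = lam.1 := htc.1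
  have htcc : P.aP tc.1.1 = P.aP lam.1 := by rw [htc1]
  have htcJ : tc ∈ pJp P (eZero P lam) := (memJ tc).2 htcc
  have htcI : tc ∈ pIp P (eZero P lam) := (memI tc).2 htcc
  have hSV : SA.SVee lam ≤ Submodule.span R (⇑SA.bas '' badSet P lam) := by
    apply Submodule.span_le.2
    rintro y ⟨lam', mu', nu', S', T', hdom, rfl⟩
    refine Submodule.subset_span ⟨⟨lam', mu', nu', (S', T')⟩, ?_, rfl⟩
    show lam' ≠ lam ∨ P.aP mu'.1 ≠ P.aP lam.1
    exact Or.inl fun h => hdom.2 (congrArg Subtype.val h)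
  have hSpV : SA.SpVee P (eZero P lam) ≤ Submodule.span R (⇑SA.bas '' badSet P lam) := by
    apply Submodule.span_le.2
    rintro y hy
    rw [Set.mem_iUnion] at hy
    obtain ⟨i, hy2⟩ := hy
    have hy3 : ∃ S ∈ pIp P i.1, ∃ T ∈ pJp P i.1,
        y = SA.bas ⟨i.1.1.1, S.1, T.1, (S.2, T.2)⟩ := hy2
    obtain ⟨S, hS, T, hT, rfl⟩ := hy3
    refine Submodule.subset_span ⟨⟨i.1.1.1, S.1, T.1, (S.2, T.2)⟩, ?_, rfl⟩
    show i.1.1.1 ≠ lam ∨ P.aP S.1.1 ≠ P.aP lam.1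
    rcases i.2 with hdom | ⟨h1, h2, -⟩
    · exact Or.inl fun h => hdom.2 (congrArg Subtype.val h)
    · rcases hS with ⟨-, hlt⟩ | ⟨hfa, -⟩
      · refine Or.inr ?_
        have he1 : i.1.1.1 = lam := h1
        intro hc
        exact hlt.2 (hc.trans (congrArg (fun l : LamP Λ => P.aP l.1) he1).symm)
      · rw [h2] at hfa; exact absurd hfa (by simp)
  -- the indices `⟨λ, type(T^λ), ·, (T^λ, ·)⟩` are not in `badSet`
  have idx_notK : ∀ t : TabOf Λ lam, idxMap lam tc t ∉ badSet P lam := by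
    intro t ht
    have ht' : lam ≠ lam ∨ P.aP tc.1.1 ≠ P.aP lam.1 := ht
    rcases ht' with h | h
    · exact h rfl
    · exact h htcc
  have idx_inj : Function.Injective (idxMap lam tc) := by
    rintro ⟨mu₁, s₁⟩ ⟨mu₂, s₂⟩ h
    simp only [idxMap] at h
    rw [Sigma.mk.inj_iff] at h
    obtain ⟨-, h⟩ := h
    rw [heq_eq_eq, Sigma.mk.inj_iff] at h
    obtain ⟨-, h⟩ := h
    rw [heq_eq_eq, Sigma.mk.inj_iff] at h
    obtain ⟨h1, h2⟩ := h
    subst h1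
    rw [heq_eq_eq, Prod.mk.injEq] at h2
    rw [h2.2]
  have hrepr0 : ∀ x : SA.carrier, x ∈ Submodule.span R (⇑SA.bas '' badSet P lam) →
      ∀ t : TabOf Λ lam, SA.bas.repr x (idxMap lam tc t) = 0 :=
    fun x hx t => basisSpanReprZero SA.bas (badSet P lam) hx (idx_notK t)
  -- computing coordinates of sums of basis vectors along `idx`
  have reprSum : ∀ (c : TabOf Λ lam → R) (t₀ : TabOf Λ lam),
      SA.bas.repr (∑ t' : TabOf Λ lam, c t' • SA.bas (idxMap lam tc t')) (idxMap lam tc t₀) =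
        c t₀ := by
    intro c t₀
    rw [map_sum, Finset.sum_apply']
    simp only [map_smul, Finsupp.smul_apply, Module.Basis.repr_self,
      Finsupp.single_apply, idx_inj.eq_iff, smul_eq_mul, mul_ite, mul_one,
      mul_zero]
    rw [Finset.sum_eq_single t₀ (fun t' _ hne => if_neg hne)
      (fun habs => absurd (Finset.mem_univ _) habs), if_pos rfl]
  have reprSumJ : ∀ (c : {x : TabOf Λ lam // x ∈ pJp P (eZero P lam)} → R)
      (t₀ : TabOf Λ lam),
      SA.bas.repr (∑ T' : {x : TabOf Λ lam // x ∈ pJp P (eZero P lam)},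
          c T' • SA.bas (idxMap lam tc T'.1)) (idxMap lam tc t₀) =
        if h : t₀ ∈ pJp P (eZero P lam) then c ⟨t₀, h⟩ else 0 := by
    intro c t₀
    rw [map_sum, Finset.sum_apply']
    simp only [map_smul, Finsupp.smul_apply, Module.Basis.repr_self,
      Finsupp.single_apply, idx_inj.eq_iff, smul_eq_mul, mul_ite, mul_one,
      mul_zero]
    by_cases h : t₀ ∈ pJp P (eZero P lam)
    · rw [dif_pos h,
        Finset.sum_eq_single (⟨t₀, h⟩ : {x : TabOf Λ lam // x ∈ pJp P (eZero P lam)})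
          (fun T' _ hne => if_neg fun hh => hne (Subtype.ext hh))
          (fun habs => absurd (Finset.mem_univ _) habs), if_pos rfl]
    · rw [dif_neg h]
      exact Finset.sum_eq_zero fun T' _ =>
        if_neg fun hh => h (by rw [← hh]; exact T'.2)
  -- Fact 1: the canonical pairing `β_{(λ,0)}` agrees with the Weyl form on `T₀^p(λ)`
  have comp1 : ∀ (S : {x : TabOf Λ lam // x ∈ pIp P (eZero P lam)})
      (T : {x : TabOf Λ lam // x ∈ pJp P (eZero P lam)}),
      f0 S T = fW T.1 S.1 := by
    intro S T
    have h1 := hfW T.1 S.1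
    have h2 : SA.bas ⟨lam, tc.1, T.1.1, (tc.2, T.1.2)⟩ *
          SA.bas ⟨lam, S.1.1, tc.1, (S.1.2, tc.2)⟩ -
        f0 S T • SA.bas ⟨lam, tc.1, tc.1, (tc.2, tc.2)⟩ ∈
          SA.SpVee P (eZero P lam) := hf0 ⟨tc, htcI⟩ T S ⟨tc, htcJ⟩
    have h4 := Submodule.sub_mem _ (hSpV h2) (hSV h1)
    rw [sub_sub_sub_cancel_left] at h4
    have h3 : (fW T.1 S.1 - f0 S T) • SA.bas (idxMap lam tc tc) ∈
        Submodule.span R (⇑SA.bas '' badSet P lam) := by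
      rw [sub_smul]
      simpa only [idxMap] using h4
    have h6 := hrepr0 _ h3 tc
    rw [map_smul, Finsupp.smul_apply, Module.Basis.repr_self, Finsupp.single_eq_same,
      smul_eq_mul, mul_one] at h6
    exact (sub_eq_zero.mp h6).symm
  -- Fact 2: `⟨φ_S, φ_T⟩ = 0` when `S ∈ T₀^p(λ)` and `T ∉ T₀^p(λ)`
  have comp2 : ∀ (T : {x : TabOf Λ lam // x ∈ pJp P (eZero P lam)})
      (t : TabOf Λ lam), t ∉ pJp P (eZero P lam) → fW T.1 t = 0 := by
    intro T t ht
    have hne : T.1.1 ≠ t.1 := by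
      intro h
      refine ht ((memJ t).2 ?_)
      rw [← congrArg Subtype.val h]
      exact (memJ T.1).1 T.2
    have hprod : SA.bas ⟨lam, tc.1, T.1.1, (tc.2, T.1.2)⟩ *
        SA.bas ⟨lam, t.1, tc.1, (t.2, tc.2)⟩ = 0 := by
      have e1 : SA.bas ⟨lam, tc.1, T.1.1, (tc.2, T.1.2)⟩ * SA.phiId T.1.1 =
          SA.bas ⟨lam, tc.1, T.1.1, (tc.2, T.1.2)⟩ := by
        rw [SA.bas_mul_phiId, if_pos rfl]
      have e2 : SA.phiId t.1 * SA.bas ⟨lam, t.1, tc.1, (t.2, tc.2)⟩ =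
          SA.bas ⟨lam, t.1, tc.1, (t.2, tc.2)⟩ := by
        rw [SA.phiId_mul_bas, if_pos rfl]
      calc SA.bas ⟨lam, tc.1, T.1.1, (tc.2, T.1.2)⟩ *
            SA.bas ⟨lam, t.1, tc.1, (t.2, tc.2)⟩
          = SA.bas ⟨lam, tc.1, T.1.1, (tc.2, T.1.2)⟩ *
            ((SA.phiId T.1.1 * SA.phiId t.1) *
              SA.bas ⟨lam, t.1, tc.1, (t.2, tc.2)⟩) := by
            conv_lhs => rw [← e1, ← e2]
            rw [mul_assoc, mul_assoc]
        _ = 0 := by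
            rw [SA.phiId_mul, if_neg hne, zero_mul, mul_zero]
    have h1 := hfW T.1 t
    rw [hprod, zero_sub] at h1
    have h1' := Submodule.neg_mem _ h1
    rw [neg_neg] at h1'
    have h6 := hrepr0 _ (hSV h1') tc
    simp only [idxMap] at h6
    rw [map_smul, Finsupp.smul_apply, Module.Basis.repr_self, Finsupp.single_eq_same,
      smul_eq_mul, mul_one] at h6
    exact h6
  -- Fact 3: the right `S^p`-action on the `φ_T`, `T ∈ T₀^p(λ)`, inside `W^λ`
  -- has coefficients given by those of `Z_p^{(λ,0)}`
  have comp3 : ∀ (a : ↥Sp) (Tp : {x : TabOf Λ lam // x ∈ pJp P (eZero P lam)})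
      (t₀ : TabOf Λ lam),
      W.bas.repr (op (a : SA.carrier) • W.bas Tp.1) t₀ =
        if h : t₀ ∈ pJp P (eZero P lam) then
          Z0.bas.repr (op a • Z0.bas Tp) ⟨t₀, h⟩ else 0 := by
    intro a Tp t₀
    have h1 : SA.bas ⟨lam, tc.1, Tp.1.1, (tc.2, Tp.1.2)⟩ * (a : SA.carrier) -
        ∑ T' : {x : TabOf Λ lam // x ∈ pJp P (eZero P lam)},
          (Z0.bas.repr (op a • Z0.bas Tp) T') • SA.bas (idxMap lam tc T'.1) ∈
        SA.SpVee P (eZero P lam) := by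
      have h0 := hZ0 ⟨tc, htcI⟩ Tp a
      simp only [idxMap]
      convert h0 using 2
      · rfl
      exact (Finset.sum_congr (congrArg (fun i => @Finset.univ _ i) (Subsingleton.elim _ _)) (fun _ _ => rfl))
    have h2 : SA.bas ⟨lam, tc.1, Tp.1.1, (tc.2, Tp.1.2)⟩ * (a : SA.carrier) -
        ∑ t' : TabOf Λ lam,
          (W.bas.repr (op (a : SA.carrier) • W.bas Tp.1) t') •
            SA.bas (idxMap lam tc t') ∈ SA.SVee lam := by
      have h0 := hW tc Tp.1 (a : SA.carrier)
      simp only [idxMap]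
      exact h0
    have h4 := Submodule.sub_mem _ (hSpV h1) (hSV h2)
    rw [sub_sub_sub_cancel_left] at h4
    have h6 := hrepr0 _ h4 t₀
    rw [map_sub, Finsupp.sub_apply, reprSum, reprSumJ] at h6
    rw [sub_eq_zero] at h6
    exact h6
  -- the `R`-linear map `L : Z_p^{(λ,0)} → W^λ`, `φ_T^{(λ,0)} ↦ φ_T`
  set L : Z0.M →ₗ[R] W.M := Z0.bas.constr ℕ (fun T => W.bas T.1) with hLdef
  have hL : ∀ T : {x : TabOf Λ lam // x ∈ pJp P (eZero P lam)},
      L (Z0.bas T) = W.bas T.1 := fun T => Z0.bas.constr_basis ℕ _ T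
  have hLsum : ∀ z : Z0.M,
      L z = ∑ T : {x : TabOf Λ lam // x ∈ pJp P (eZero P lam)},
        Z0.bas.repr z T • W.bas T.1 := by
    intro z
    conv_lhs => rw [← Z0.bas.sum_repr z]
    rw [map_sum]
    exact Finset.sum_congr rfl fun T _ => by rw [map_smul, hL]
  have reprL : ∀ (z : Z0.M) (t : TabOf Λ lam),
      W.bas.repr (L z) t =
        if h : t ∈ pJp P (eZero P lam) then Z0.bas.repr z ⟨t, h⟩ else 0 := by
    intro z t
    rw [hLsum, map_sum, Finset.sum_apply']
    simp only [map_smul, Finsupp.smul_apply, Module.Basis.repr_self, smul_eq_mul]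
    by_cases h : t ∈ pJp P (eZero P lam)
    · rw [dif_pos h,
        Finset.sum_eq_single (⟨t, h⟩ : {x : TabOf Λ lam // x ∈ pJp P (eZero P lam)})
          (fun T' _ hne => by
            rw [Finsupp.single_apply, if_neg fun hh => hne (Subtype.ext hh),
              mul_zero])
          (fun habs => absurd (Finset.mem_univ _) habs)]
      rw [Finsupp.single_eq_same, mul_one]
    · rw [dif_neg h]
      refine Finset.sum_eq_zero fun T' _ => ?_
      rw [Finsupp.single_apply, if_neg fun hh => h (by rw [← hh]; exact T'.2),
        mul_zero]
  -- `L` is `S^p`-equivariant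
  have hLsmul : ∀ (a : ↥Sp) (z : Z0.M),
      L (op a • z) = op (a : SA.carrier) • L z := by
    intro a z
    have hbase : ∀ T : {x : TabOf Λ lam // x ∈ pJp P (eZero P lam)},
        L (op a • Z0.bas T) = op (a : SA.carrier) • L (Z0.bas T) := by
      intro T
      apply W.bas.ext_elem
      intro t
      rw [reprL, hL]
      exact (comp3 a T t).symm
    have hmain :
        (L ∘ₗ { toFun := fun z : Z0.M => op a • z,
                map_add' := fun x y => smul_add _ x y,
                map_smul' := fun c x => opSmulComm (op a) c x }) =
        (({ toFun := fun x : W.M => op (a : SA.carrier) • x,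
            map_add' := fun x y => smul_add _ x y,
            map_smul' := fun c x => opSmulComm _ c x } : W.M →ₗ[R] W.M) ∘ₗ L) :=
      Z0.bas.ext fun T => hbase T
    exact LinearMap.congr_fun hmain z
  -- the key formula relating the two bilinear forms through `L`
  have keyForm : ∀ (z : Z0.M) (t : TabOf Λ lam),
      (∑ s : TabOf Λ lam, W.bas.repr (L z) s * fW s t) =
        if h : t ∈ pIp P (eZero P lam) then
          ∑ T : {x : TabOf Λ lam // x ∈ pJp P (eZero P lam)},
            Z0.bas.repr z T * f0 ⟨t, h⟩ T
        else 0 := by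
    intro z t
    have step1 : (∑ s : TabOf Λ lam, W.bas.repr (L z) s * fW s t) =
        ∑ T : {x : TabOf Λ lam // x ∈ pJp P (eZero P lam)},
          Z0.bas.repr z T * fW T.1 t := by
      rw [← sumDiteSubtype (fun x : TabOf Λ lam => x ∈ pJp P (eZero P lam))
        (fun s h => Z0.bas.repr z ⟨s, h⟩ * fW s t)]
      refine Finset.sum_congr rfl fun s _ => ?_
      rw [reprL]
      by_cases h : s ∈ pJp P (eZero P lam)
      · rw [dif_pos h, dif_pos h]
      · rw [dif_neg h, dif_neg h, zero_mul]
    rw [step1]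
    by_cases h : t ∈ pIp P (eZero P lam)
    · rw [dif_pos h]
      exact Finset.sum_congr rfl fun T _ => by rw [comp1 ⟨t, h⟩ T]
    · rw [dif_neg h]
      refine Finset.sum_eq_zero fun T _ => ?_
      rw [comp2 T t fun hj => h ((memI t).2 ((memJ t).1 hj)), mul_zero]
  -- `L` maps `rad β_{(λ,0)}` into `rad W^λ`, and conversely
  have hLN : ∀ z : Z0.M, z ∈ N0 → L z ∈ NW := by
    intro z hz
    refine (hNW (L z)).2 fun t => ?_
    rw [keyForm]
    by_cases h : t ∈ pIp P (eZero P lam)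
    · rw [dif_pos h]
      refine Eq.trans ?_ ((hN0 z).1 hz ⟨t, h⟩)
      exact (Finset.sum_congr (congrArg (fun i => @Finset.univ _ i) (Subsingleton.elim _ _)) (fun _ _ => rfl))
    · rw [dif_neg h]
  have hNL : ∀ z : Z0.M, L z ∈ NW → z ∈ N0 := by
    intro z hz
    refine (hN0 z).2 fun S => ?_
    have h := (keyForm z S.1).trans (dif_pos S.2)
    refine Eq.trans ?_ (h.symm.trans (Eq.trans ?_ ((hNW (L z)).1 hz S.1)))
    · exact (Finset.sum_congr (congrArg (fun i => @Finset.univ _ i) (Subsingleton.elim _ _)) (fun _ _ => rfl))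
    · exact (Finset.sum_congr (congrArg (fun i => @Finset.univ _ i) (Subsingleton.elim _ _)) (fun _ _ => rfl))
  -- assemble the quotient map
  have hker : N0.restrictScalars R ≤
      LinearMap.ker ((NW.restrictScalars R).mkQ ∘ₗ L) := by
    intro z hz
    rw [LinearMap.mem_ker, LinearMap.comp_apply, Submodule.mkQ_apply,
      Submodule.Quotient.mk_eq_zero]
    exact hLN z hz
  set F : (Z0.M ⧸ N0) →ₗ[R] (W.M ⧸ NW) :=
    (Submodule.Quotient.restrictScalarsEquiv R NW).toLinearMap ∘ₗ
      (Submodule.liftQ (N0.restrictScalars R)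
          ((NW.restrictScalars R).mkQ ∘ₗ L) hker ∘ₗ
        (Submodule.Quotient.restrictScalarsEquiv R N0).symm.toLinearMap) with hF
  have hFmk : ∀ z : Z0.M,
      F (Submodule.Quotient.mk z) = Submodule.Quotient.mk (L z) := by
    intro z
    rw [hF]
    simp only [LinearMap.comp_apply, LinearEquiv.coe_coe,
      Submodule.Quotient.restrictScalarsEquiv_symm_mk, Submodule.liftQ_apply,
      Submodule.mkQ_apply, Submodule.Quotient.restrictScalarsEquiv_mk]
  refine ⟨F, ?_, ?_⟩
  · intro x y hxy
    obtain ⟨zx, rfl⟩ := Submodule.Quotient.mk_surjective N0 x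
    obtain ⟨zy, rfl⟩ := Submodule.Quotient.mk_surjective N0 y
    rw [hFmk, hFmk] at hxy
    rw [Submodule.Quotient.eq] at hxy
    rw [← map_sub] at hxy
    rw [Submodule.Quotient.eq]
    exact hNL _ hxy
  · intro a x
    obtain ⟨z, rfl⟩ := Submodule.Quotient.mk_surjective N0 x
    rw [← Submodule.Quotient.mk_smul, hFmk, hLsmul,
      Submodule.Quotient.mk_smul, hFmk]
end
end

section
/- Let Λ = P~_{n,r}(m), Λ^+ = P_{n,r}(m), and let α = (n_1, …, n_g) with all n_k > 0 and n_1 + ⋯ + n_g = n. Then: (i) the map μ ↦ (μ^{[1]}, …, μ^{[g]}) is a bijection from {μ ∈ Λ : α_p(μ) = α} onto Λ_{n_1} × ⋯ × Λ_{n_g}; (ii) the map λ ↦ (λ^{[1]}, …, λ^{[g]}) is a bijection from {λ ∈ Λ^+ : α_p(λ) = α} onto Λ^+_{n_1} × ⋯ × Λ^+_{n_g}; (iii) for λ ∈ Λ^+ and μ ∈ Λ with α_p(λ) = α_p(μ), the map T ↦ (T^{[1]}, …, T^{[g]}) is a bijection from T_0^p(λ,μ) onto T_0(λ^{[1]},μ^{[1]})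 × ⋯ × T_0(λ^{[g]},μ^{[g]}). -/
/-!
Common framework for the formalization of results of Shoji–Wada,
"Cyclotomic q-Schur algebras associated to the Ariki-Koike algebra".
-/

open scoped BigOperators TensorProduct
open MulOpposite

noncomputable section

/-! ## Auxiliary infrastructure for Statement 14 -/

section AuxSW14

variable {n r g : ℕ} {m : Fin r → ℕ}

theorem MultiComp.part_congr' (x : MultiComp n r m) {k k' : Fin r} (h : k = k')
    {i : Fin (m k)} {i' : Fin (m k')} (hv : (i : ℕ) = (i' : ℕ)) :
    x.part k i = x.part k' i' := by
  subst h
  cases Fin.ext hv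
  rfl

theorem MultiComp.part_cast (x : MultiComp n r m) {k K : Fin r} (h : K = k)
    (i : Fin (m k)) :
    x.part k i = x.part K (Fin.cast (congrArg m h).symm i) :=
  MultiComp.part_congr' x h.symm rfl

theorem MCEntry.ext'' {a b : MCEntry r m} (h1 : a.1 = b.1)
    (h2 : (a.2 : ℕ) = (b.2 : ℕ)) : a = b := by
  obtain ⟨k, i⟩ := a
  obtain ⟨k', i'⟩ := b
  change k = k' at h1
  subst h1
  change (i : ℕ) = (i' : ℕ) at h2
  cases Fin.ext h2
  rfl

theorem MultiComp.cell_ext' {x : MultiComp n r m} {c c' : x.Cell} (h1 : c.1 = c'.1)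
    (h2 : (c.2.1 : ℕ) = (c'.2.1 : ℕ)) (h3 : (c.2.2 : ℕ) = (c'.2.2 : ℕ)) :
    c = c' := by
  obtain ⟨k, i, j⟩ := c
  obtain ⟨k', i', j'⟩ := c'
  change k = k' at h1
  subst h1
  change (i : ℕ) = (i' : ℕ) at h2
  cases Fin.ext h2
  change (j : ℕ) = (j' : ℕ) at h3
  cases Fin.ext h3
  rfl

namespace BlockCtx

variable (P : BlockCtx r g)

theorem pi_coe_blkEquiv (b : Fin g) (kb : Fin (P.rblk b)) :
    P.π ↑(P.blkEquiv b kb) = b :=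
  (Finset.mem_filter.1 (P.blkEquiv b kb).2).2

/-- the index of a component `k` inside its block -/
def blkIdx {b : Fin g} (k : Fin r) (h : P.π k = b) : Fin (P.rblk b) :=
  (P.blkEquiv b).symm ⟨k, Finset.mem_filter.2 ⟨Finset.mem_univ _, h⟩⟩

theorem coe_blkEquiv_blkIdx {b : Fin g} (k : Fin r) (h : P.π k = b) :
    ↑(P.blkEquiv b (P.blkIdx k h)) = k :=
  congrArg Subtype.val ((P.blkEquiv b).apply_symm_apply _)

theorem blkIdx_coe_blkEquiv (b : Fin g) (kb : Fin (P.rblk b))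
    (h : P.π ↑(P.blkEquiv b kb) = b) :
    P.blkIdx (↑(P.blkEquiv b kb)) h = kb := by
  unfold blkIdx
  exact (OrderIso.symm_apply_eq _).2 (Subtype.ext rfl)

theorem coe_blkEquiv_lt_iff (b : Fin g) (kb kb' : Fin (P.rblk b)) :
    (↑(P.blkEquiv b kb) : Fin r) < ↑(P.blkEquiv b kb') ↔ kb < kb' :=
  Iff.trans Subtype.coe_lt_coe ((P.blkEquiv b).lt_iff_lt)

theorem coe_blkEquiv_le_iff (b : Fin g) (kb kb' : Fin (P.rblk b)) :
    (↑(P.blkEquiv b kb) : Fin r) ≤ ↑(P.blkEquiv b kb') ↔ kb ≤ kb' :=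
  Iff.trans Subtype.coe_le_coe ((P.blkEquiv b).le_iff_le)

theorem coe_blkEquiv_inj {b : Fin g} {kb kb' : Fin (P.rblk b)}
    (h : (↑(P.blkEquiv b kb) : Fin r) = ↑(P.blkEquiv b kb')) : kb = kb' :=
  (P.blkEquiv b).injective (Subtype.ext h)

theorem blkIdx_le_blkIdx {b : Fin g} {k k' : Fin r} (hk : P.π k = b)
    (hk' : P.π k' = b) (h : k ≤ k') : P.blkIdx k hk ≤ P.blkIdx k' hk' :=
  (P.blkEquiv b).symm.le_iff_le.2 (Subtype.mk_le_mk.2 h)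

/-! ### entries -/

/-- the entry of `MCEntry r m` corresponding to a block entry -/
def toEntry (b : Fin g) (e : MCEntry (P.rblk b) (P.mblk m b)) : MCEntry r m :=
  ⟨↑(P.blkEquiv b e.1), e.2⟩

/-- the block entry corresponding to an entry lying in block `b` -/
def fromEntry (b : Fin g) (e : MCEntry r m) (h : P.π e.1 = b) :
    MCEntry (P.rblk b) (P.mblk m b) :=
  ⟨P.blkIdx e.1 h, Fin.cast (congrArg m (P.coe_blkEquiv_blkIdx e.1 h)).symm e.2⟩

theorem pi_toEntry (b : Fin g) (e : MCEntry (P.rblk b) (P.mblk m b)) :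
    P.π (P.toEntry b e).1 = b :=
  P.pi_coe_blkEquiv b e.1

theorem toEntry_fromEntry (b : Fin g) (e : MCEntry r m) (h : P.π e.1 = b) :
    P.toEntry b (P.fromEntry b e h) = e :=
  MCEntry.ext'' (P.coe_blkEquiv_blkIdx e.1 h) rfl

theorem fromEntry_toEntry (b : Fin g) (e : MCEntry (P.rblk b) (P.mblk m b))
    (h : P.π (P.toEntry b e).1 = b) :
    P.fromEntry b (P.toEntry b e) h = e :=
  MCEntry.ext'' (P.blkIdx_coe_blkEquiv b e.1 h) rfl

theorem fromEntry_eq {b : Fin g} {e : MCEntry r m} {he : P.π e.1 = b}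
    {eb : MCEntry (P.rblk b) (P.mblk m b)} (h : e = P.toEntry b eb) :
    P.fromEntry b e he = eb := by
  subst h
  exact P.fromEntry_toEntry b eb he

theorem entryLE_toEntry_iff (b : Fin g) (e1 e2 : MCEntry (P.rblk b) (P.mblk m b)) :
    entryLE (P.toEntry b e1) (P.toEntry b e2) ↔ entryLE e1 e2 := by
  constructor
  · rintro (h | ⟨h, h2⟩)
    · exact Or.inl ((P.coe_blkEquiv_lt_iff b e1.1 e2.1).1 h)
    · exact Or.inr ⟨P.coe_blkEquiv_inj h, h2⟩
  · rintro (h | ⟨h, h2⟩)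
    · exact Or.inl ((P.coe_blkEquiv_lt_iff b e1.1 e2.1).2 h)
    · exact Or.inr ⟨congrArg (fun x => (↑(P.blkEquiv b x) : Fin r)) h, h2⟩

theorem entryLT_toEntry_iff (b : Fin g) (e1 e2 : MCEntry (P.rblk b) (P.mblk m b)) :
    entryLT (P.toEntry b e1) (P.toEntry b e2) ↔ entryLT e1 e2 := by
  constructor
  · rintro (h | ⟨h, h2⟩)
    · exact Or.inl ((P.coe_blkEquiv_lt_iff b e1.1 e2.1).1 h)
    · exact Or.inr ⟨P.coe_blkEquiv_inj h, h2⟩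
  · rintro (h | ⟨h, h2⟩)
    · exact Or.inl ((P.coe_blkEquiv_lt_iff b e1.1 e2.1).2 h)
    · exact Or.inr ⟨congrArg (fun x => (↑(P.blkEquiv b x) : Fin r)) h, h2⟩

theorem entryLE_fromEntry_iff (b : Fin g) (e1 e2 : MCEntry r m)
    (h1 : P.π e1.1 = b) (h2 : P.π e2.1 = b) :
    entryLE (P.fromEntry b e1 h1) (P.fromEntry b e2 h2) ↔ entryLE e1 e2 := by
  conv_rhs => rw [← P.toEntry_fromEntry b e1 h1, ← P.toEntry_fromEntry b e2 h2]
  exact (P.entryLE_toEntry_iff b _ _).symm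

theorem entryLT_fromEntry_iff (b : Fin g) (e1 e2 : MCEntry r m)
    (h1 : P.π e1.1 = b) (h2 : P.π e2.1 = b) :
    entryLT (P.fromEntry b e1 h1) (P.fromEntry b e2 h2) ↔ entryLT e1 e2 := by
  conv_rhs => rw [← P.toEntry_fromEntry b e1 h1, ← P.toEntry_fromEntry b e2 h2]
  exact (P.entryLT_toEntry_iff b _ _).symm

/-! ### cells -/

/-- the global cell corresponding to a cell of the `b`-th block component -/
def toCell {x : MultiComp n r m} {b : Fin g} {nb : ℕ} {hb : P.alphaP x b = nb}
    (c : (P.restrictTo x b nb hb).Cell) : x.Cell :=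
  ⟨↑(P.blkEquiv b c.1), c.2.1, c.2.2⟩

/-- the block cell corresponding to a global cell lying in block `b` -/
def fromCell {x : MultiComp n r m} {b : Fin g} {nb : ℕ} (hb : P.alphaP x b = nb)
    (c : x.Cell) (h : P.π c.1 = b) : (P.restrictTo x b nb hb).Cell :=
  ⟨P.blkIdx c.1 h,
   Fin.cast (congrArg m (P.coe_blkEquiv_blkIdx c.1 h)).symm c.2.1,
   Fin.cast (MultiComp.part_cast x (P.coe_blkEquiv_blkIdx c.1 h) c.2.1) c.2.2⟩

theorem pi_toCell {x : MultiComp n r m} {b : Fin g} {nb : ℕ}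
    {hb : P.alphaP x b = nb} (c : (P.restrictTo x b nb hb).Cell) :
    P.π (P.toCell c).1 = b :=
  P.pi_coe_blkEquiv b c.1

theorem toCell_fromCell {x : MultiComp n r m} {b : Fin g} {nb : ℕ}
    (hb : P.alphaP x b = nb) (c : x.Cell) (h : P.π c.1 = b) :
    P.toCell (P.fromCell hb c h) = c :=
  MultiComp.cell_ext' (P.coe_blkEquiv_blkIdx c.1 h) rfl rfl

theorem fromCell_toCell {x : MultiComp n r m} {b : Fin g} {nb : ℕ}
    {hb : P.alphaP x b = nb} (c : (P.restrictTo x b nb hb).Cell)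
    (h : P.π (P.toCell c).1 = b) :
    P.fromCell hb (P.toCell c) h = c :=
  MultiComp.cell_ext' (P.blkIdx_coe_blkEquiv b c.1 h) rfl rfl

/-! ### sums over blocks -/

theorem sum_blk (f : Fin r → ℕ) (b : Fin g) :
    ∑ kb : Fin (P.rblk b), f ↑(P.blkEquiv b kb)
      = ∑ k ∈ Finset.univ.filter (fun k => P.π k = b), f k := by
  rw [← Finset.sum_coe_sort (Finset.univ.filter fun k => P.π k = b) f]
  exact Fintype.sum_equiv (P.blkEquiv b).toEquiv _ _ fun _ => rfl

theorem sum_fiber (f : Fin r → ℕ) :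
    (∑ b, ∑ k ∈ Finset.univ.filter (fun k => P.π k = b), f k) = ∑ k, f k :=
  Finset.sum_fiberwise_of_maps_to (fun k _ => Finset.mem_univ _) f

theorem total_compSize (x : MultiComp n r m) : ∑ k, x.compSize k = n :=
  x.sum_eq

/-! ### gluing multicompositions -/

variable (nbf : Fin g → ℕ)

/-- the part function obtained by gluing block multicompositions -/
def pfGlue (f : ∀ b, MultiComp (nbf b) (P.rblk b) (P.mblk m b))
    (k : Fin r) (i : Fin (m k)) : ℕ :=
  (f (P.π k)).part (P.blkIdx k rfl)
    (Fin.cast (congrArg m (P.coe_blkEquiv_blkIdx k rfl)).symm i)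

theorem pfGlue_eq (f : ∀ b, MultiComp (nbf b) (P.rblk b) (P.mblk m b))
    (k : Fin r) (b : Fin g) (h : P.π k = b) (i : Fin (m k)) :
    P.pfGlue nbf f k i = (f b).part (P.blkIdx k h)
      (Fin.cast (congrArg m (P.coe_blkEquiv_blkIdx k h)).symm i) := by
  subst h
  rfl

theorem pfGlue_fiber (f : ∀ b, MultiComp (nbf b) (P.rblk b) (P.mblk m b))
    (b : Fin g) :
    (∑ k ∈ Finset.univ.filter (fun k => P.π k = b), ∑ i, P.pfGlue nbf f k i)
      = nbf b := by
  rw [← P.sum_blk (fun k => ∑ i, P.pfGlue nbf f k i) b]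
  have step : ∀ kb : Fin (P.rblk b),
      (∑ i, P.pfGlue nbf f (↑(P.blkEquiv b kb)) i) = (f b).compSize kb := by
    intro kb
    have hpi := P.pi_coe_blkEquiv b kb
    calc (∑ i, P.pfGlue nbf f (↑(P.blkEquiv b kb)) i)
        = ∑ i, (f b).part (P.blkIdx _ hpi)
            (Fin.cast (congrArg m (P.coe_blkEquiv_blkIdx _ hpi)).symm i) :=
          Finset.sum_congr rfl fun i _ => P.pfGlue_eq nbf f _ b hpi i
      _ = ∑ i', (f b).part (P.blkIdx _ hpi) i' :=
          Fintype.sum_equiv (finCongr (congrArg m (P.coe_blkEquiv_blkIdx _ hpi)).symm)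
            _ _ fun i => rfl
      _ = (f b).compSize (P.blkIdx _ hpi) := rfl
      _ = (f b).compSize kb := by rw [P.blkIdx_coe_blkEquiv b kb hpi]
  rw [Finset.sum_congr rfl (fun kb _ => step kb)]
  exact (f b).sum_eq

/-- gluing block multicompositions into a multicomposition of `n` -/
def glueComp (hsum : ∑ b, nbf b = n)
    (f : ∀ b, MultiComp (nbf b) (P.rblk b) (P.mblk m b)) : MultiComp n r m where
  part := P.pfGlue nbf f
  sum_eq := by
    rw [← P.sum_fiber (fun k => ∑ i, P.pfGlue nbf f k i),
      Finset.sum_congr rfl (fun b _ => P.pfGlue_fiber nbf f b)]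
    exact hsum

theorem alphaP_glueComp (hsum : ∑ b, nbf b = n)
    (f : ∀ b, MultiComp (nbf b) (P.rblk b) (P.mblk m b)) :
    P.alphaP (P.glueComp nbf hsum f) = nbf := by
  funext b
  exact P.pfGlue_fiber nbf f b

theorem restrictTo_glueComp (hsum : ∑ b, nbf b = n)
    (f : ∀ b, MultiComp (nbf b) (P.rblk b) (P.mblk m b)) (b : Fin g)
    {h : P.alphaP (P.glueComp nbf hsum f) b = nbf b} :
    P.restrictTo (P.glueComp nbf hsum f) b (nbf b) h = f b := by
  apply MultiComp.part_injective
  funext kb i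
  show P.pfGlue nbf f (↑(P.blkEquiv b kb)) i = (f b).part kb i
  rw [P.pfGlue_eq nbf f _ b (P.pi_coe_blkEquiv b kb) i]
  exact MultiComp.part_congr' (f b) (P.blkIdx_coe_blkEquiv b kb _) rfl

theorem glueComp_isPartition (hsum : ∑ b, nbf b = n)
    (f : ∀ b, MultiComp (nbf b) (P.rblk b) (P.mblk m b))
    (hp : ∀ b, (f b).IsPartition) : (P.glueComp nbf hsum f).IsPartition := by
  intro k i j hij
  exact hp (P.π k) (P.blkIdx k rfl) _ _ (Fin.le_def.2 (Fin.le_def.1 hij))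

theorem restrict_inj (mu1 mu2 : MultiComp n r m)
    (h1 : ∀ b, P.alphaP mu1 b = nbf b) (h2 : ∀ b, P.alphaP mu2 b = nbf b)
    (h : ∀ b, P.restrictTo mu1 b (nbf b) (h1 b) = P.restrictTo mu2 b (nbf b) (h2 b)) :
    mu1 = mu2 := by
  apply MultiComp.part_injective
  funext k i
  have hK : (↑(P.blkEquiv (P.π k) (P.blkIdx k rfl)) : Fin r) = k :=
    P.coe_blkEquiv_blkIdx k rfl
  have h' := congrFun (congrFun (congrArg MultiComp.part (h (P.π k)))
    (P.blkIdx k rfl)) (Fin.cast (congrArg m hK).symm i)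
  calc mu1.part k i
      = mu1.part _ (Fin.cast (congrArg m hK).symm i) := MultiComp.part_cast mu1 hK i
    _ = mu2.part _ (Fin.cast (congrArg m hK).symm i) := h'
    _ = mu2.part k i := (MultiComp.part_cast mu2 hK i).symm

/-! ### counting cells by blocks -/

theorem card_cells_le (x : MultiComp n r m) (b : Fin g) :
    (Finset.univ.filter fun c : x.Cell => P.π c.1 ≤ b).card
      = ∑ k ∈ Finset.univ.filter (fun k => P.π k ≤ b), x.compSize k := by
  rw [Finset.card_filter, ← Finset.univ_sigma_univ, Finset.sum_sigma,
    Finset.sum_filter]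
  refine Finset.sum_congr rfl fun k _ => ?_
  rw [← Finset.univ_sigma_univ, Finset.sum_sigma]
  by_cases h : P.π k ≤ b
  · simp [h, MultiComp.compSize]
  · simp [h]

theorem card_entry_le (lam mu : MultiComp n r m) (T : SSTab lam mu) (b : Fin g) :
    (Finset.univ.filter fun c : lam.Cell => P.π (T.entry c).1 ≤ b).card
      = ∑ k ∈ Finset.univ.filter (fun k => P.π k ≤ b), mu.compSize k := by
  rw [Finset.card_eq_sum_card_fiberwise
    (f := T.entry) (t := Finset.univ.filter fun e : MCEntry r m => P.π e.1 ≤ b)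
    (fun c hc => Finset.mem_filter.2 ⟨Finset.mem_univ _, (Finset.mem_filter.1 hc).2⟩)]
  have h1 : ∀ e ∈ Finset.univ.filter (fun e : MCEntry r m => P.π e.1 ≤ b),
      ((Finset.univ.filter fun c : lam.Cell => P.π (T.entry c).1 ≤ b).filter
        (fun c => T.entry c = e)).card = mu.part e.1 e.2 := by
    intro e he
    rw [Finset.filter_filter]
    have h2 : (Finset.univ.filter fun c : lam.Cell =>
          P.π (T.entry c).1 ≤ b ∧ T.entry c = e)
        = Finset.univ.filter fun c => T.entry c = e := by
      apply Finset.filter_congr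
      intro c _
      constructor
      · exact And.right
      · intro hc
        exact ⟨by rw [hc]; exact (Finset.mem_filter.1 he).2, hc⟩
    rw [h2, T.typeCount e, Fintype.card_subtype]
  rw [Finset.sum_congr rfl h1, Finset.sum_filter, ← Finset.univ_sigma_univ,
    Finset.sum_sigma, Finset.sum_filter]
  refine Finset.sum_congr rfl fun k _ => ?_
  by_cases h : P.π k ≤ b
  · simp [h, MultiComp.compSize]
  · simp [h]

theorem S_split (x : MultiComp n r m) (b : Fin g) :
    (∑ k ∈ Finset.univ.filter (fun k => P.π k ≤ b), x.compSize k)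
      = P.aP x b + P.alphaP x b := by
  unfold BlockCtx.aP BlockCtx.alphaP
  rw [Finset.sum_filter, Finset.sum_filter, Finset.sum_filter,
    ← Finset.sum_add_distrib]
  refine Finset.sum_congr rfl fun k _ => ?_
  rcases lt_trichotomy (P.π k) b with h | h | h
  · simp [h, h.le, h.ne]
  · simp [h]
  · simp [not_le.2 h, lt_asymm h, h.ne']

theorem S_eq_of_aP (lam mu : MultiComp n r m) (h : P.aP lam = P.aP mu) (b : Fin g) :
    (∑ k ∈ Finset.univ.filter (fun k => P.π k ≤ b), lam.compSize k)
      = ∑ k ∈ Finset.univ.filter (fun k => P.π k ≤ b), mu.compSize k := by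
  by_cases hb : b.1 + 1 < g
  · have hf : ∀ x : MultiComp n r m,
        (∑ k ∈ Finset.univ.filter (fun k => P.π k ≤ b), x.compSize k)
          = P.aP x ⟨b.1 + 1, hb⟩ := by
      intro x
      refine Finset.sum_congr ?_ fun _ _ => rfl
      apply Finset.filter_congr
      intro k _
      have hiff : (P.π k ≤ b) ↔ (P.π k < ⟨b.1 + 1, hb⟩) := by
        rw [Fin.lt_def, Fin.le_def]
        show (P.π k).1 ≤ b.1 ↔ (P.π k).1 < b.1 + 1
        omega
      first
      | exact hiff
      | exact propext hiff
    rw [hf, hf, h]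
  · have hfilter : (Finset.univ.filter fun k => P.π k ≤ b) = Finset.univ := by
      apply Finset.filter_true_of_mem
      intro k _
      have h1 := (P.π k).2
      have h2 := b.2
      exact Fin.le_def.2 (by omega)
    rw [hfilter, BlockCtx.total_compSize, BlockCtx.total_compSize]

theorem alphaP_eq_of_aP {lam mu : MultiComp n r m} (h : P.aP lam = P.aP mu) :
    P.alphaP mu = P.alphaP lam := by
  funext b
  have h1 := (P.S_split mu b).symm.trans
    ((P.S_eq_of_aP lam mu h b).symm.trans (P.S_split lam b))
  rw [congrFun h b] at h1
  exact Nat.add_left_cancel h1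

theorem pi_entry_eq {lam mu : MultiComp n r m} (T : SSTab lam mu)
    (hS : ∀ b, (∑ k ∈ Finset.univ.filter (fun k => P.π k ≤ b), lam.compSize k)
      = ∑ k ∈ Finset.univ.filter (fun k => P.π k ≤ b), mu.compSize k)
    (c : lam.Cell) : P.π (T.entry c).1 = P.π c.1 := by
  refine le_antisymm ?_ (P.mono (T.compLE c))
  set b := P.π c.1 with hb
  have hsub : (Finset.univ.filter fun c' : lam.Cell => P.π (T.entry c').1 ≤ b)
      ⊆ Finset.univ.filter fun c' : lam.Cell => P.π c'.1 ≤ b :=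
    fun c' hc' => Finset.mem_filter.2 ⟨Finset.mem_univ _,
      le_trans (P.mono (T.compLE c')) (Finset.mem_filter.1 hc').2⟩
  have hcard : (Finset.univ.filter fun c' : lam.Cell => P.π c'.1 ≤ b).card
      ≤ (Finset.univ.filter fun c' : lam.Cell => P.π (T.entry c').1 ≤ b).card := by
    rw [P.card_cells_le lam b, P.card_entry_le lam mu T b, hS b]
  have heq := Finset.eq_of_subset_of_card_le hsub hcard
  have hc : c ∈ Finset.univ.filter fun c' : lam.Cell => P.π c'.1 ≤ b :=
    Finset.mem_filter.2 ⟨Finset.mem_univ _, le_refl b⟩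
  rw [← heq] at hc
  exact (Finset.mem_filter.1 hc).2

/-! ### restricting and gluing semistandard tableaux -/

variable {lam mu : MultiComp n r m}

/-- the restriction of a semistandard tableau to the `b`-th block -/
def restrictTab (T : SSTab lam mu)
    (hkey : ∀ c : lam.Cell, P.π (T.entry c).1 = P.π c.1)
    (b : Fin g) (nb : ℕ) (hl : P.alphaP lam b = nb) (hmu : P.alphaP mu b = nb) :
    SSTab (P.restrictTo lam b nb hl) (P.restrictTo mu b nb hmu) where
  entry c := P.fromEntry b (T.entry (P.toCell c)) (by rw [hkey]; exact P.pi_toCell c)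
  rowWeak k i j j' hj :=
    (P.entryLE_fromEntry_iff b _ _ _ _).2 (T.rowWeak _ i j j' hj)
  colStrict k i i' j hj hj' hii :=
    (P.entryLT_fromEntry_iff b _ _ _ _).2 (T.colStrict _ i i' j hj hj' hii)
  compLE c := by
    have h1 := T.compLE (P.toCell c)
    have h2 := P.blkIdx_le_blkIdx (P.pi_coe_blkEquiv b c.1)
      (by rw [hkey]; exact P.pi_toCell c) h1
    rwa [P.blkIdx_coe_blkEquiv] at h2
  typeCount eb := by
    refine (T.typeCount (P.toEntry b eb)).trans (Fintype.card_congr ?_)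
    refine Equiv.mk
      (fun x => ⟨P.fromCell hl x.1 (by rw [← hkey x.1, x.2]; exact P.pi_toEntry b eb),
        ?_⟩)
      (fun y => ⟨P.toCell y.1, ?_⟩) ?_ ?_
    · refine P.fromEntry_eq ?_
      rw [P.toCell_fromCell hl x.1 _]
      exact x.2
    · exact (P.toEntry_fromEntry b _ _).symm.trans (congrArg (P.toEntry b) y.2)
    · intro x
      exact Subtype.ext (P.toCell_fromCell hl x.1 _)
    · intro y
      exact Subtype.ext (P.fromCell_toCell y.1 _)

variable (nbf : Fin g → ℕ)
variable (hlf : ∀ b, P.alphaP lam b = nbf b) (hmf : ∀ b, P.alphaP mu b = nbf b)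
variable (G : ∀ b, SSTab (P.restrictTo lam b (nbf b) (hlf b))
  (P.restrictTo mu b (nbf b) (hmf b)))

/-- the entry function obtained by gluing block tableaux -/
def glueEnt (c : lam.Cell) : MCEntry r m :=
  P.toEntry (P.π c.1) ((G (P.π c.1)).entry (P.fromCell (hlf (P.π c.1)) c rfl))

theorem glueEnt_eq (c : lam.Cell) (b : Fin g) (h : P.π c.1 = b) :
    P.glueEnt nbf hlf hmf G c
      = P.toEntry b ((G b).entry (P.fromCell (hlf b) c h)) := by
  subst h
  rfl

theorem pi_glueEnt (c : lam.Cell) :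
    P.π (P.glueEnt nbf hlf hmf G c).1 = P.π c.1 :=
  P.pi_toEntry _ _

/-- gluing block semistandard tableaux into a global one -/
def glueTab : SSTab lam mu where
  entry := P.glueEnt nbf hlf hmf G
  rowWeak k i j j' hj :=
    (P.entryLE_toEntry_iff (P.π k) _ _).2
      ((G (P.π k)).rowWeak (P.blkIdx k rfl)
        (Fin.cast (congrArg m (P.coe_blkEquiv_blkIdx k rfl)).symm i)
        (Fin.cast (MultiComp.part_cast lam (P.coe_blkEquiv_blkIdx k rfl) i) j)
        (Fin.cast (MultiComp.part_cast lam (P.coe_blkEquiv_blkIdx k rfl) i) j')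
        (Fin.le_def.2 (Fin.le_def.1 hj)))
  colStrict k i i' j hj hj' hii :=
    (P.entryLT_toEntry_iff (P.π k) _ _).2
      ((G (P.π k)).colStrict (P.blkIdx k rfl)
        (Fin.cast (congrArg m (P.coe_blkEquiv_blkIdx k rfl)).symm i)
        (Fin.cast (congrArg m (P.coe_blkEquiv_blkIdx k rfl)).symm i')
        j ((MultiComp.part_cast lam (P.coe_blkEquiv_blkIdx k rfl) i) ▸ hj)
        ((MultiComp.part_cast lam (P.coe_blkEquiv_blkIdx k rfl) i') ▸ hj')
        (Fin.lt_def.2 (Fin.lt_def.1 hii)))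
  compLE c := by
    have h1 := (G (P.π c.1)).compLE (P.fromCell (hlf (P.π c.1)) c rfl)
    have h2 := (P.coe_blkEquiv_le_iff (P.π c.1) _ _).2 h1
    calc c.1 = ↑(P.blkEquiv (P.π c.1) (P.blkIdx c.1 rfl)) :=
          (P.coe_blkEquiv_blkIdx c.1 rfl).symm
      _ ≤ (P.glueEnt nbf hlf hmf G c).1 := h2
  typeCount e := by
    refine ((MultiComp.part_cast mu (P.coe_blkEquiv_blkIdx e.1 rfl) e.2).trans
      ((G (P.π e.1)).typeCount (P.fromEntry (P.π e.1) e rfl))).trans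
      (Fintype.card_congr ?_)
    refine Equiv.mk
      (fun x => ⟨P.toCell x.1, ?_⟩)
      (fun y => ⟨P.fromCell (hlf (P.π e.1)) y.1
        (by rw [← P.pi_glueEnt nbf hlf hmf G y.1, y.2]), ?_⟩) ?_ ?_
    · show P.glueEnt nbf hlf hmf G (P.toCell x.1) = e
      rw [P.glueEnt_eq nbf hlf hmf G (P.toCell x.1) (P.π e.1) (P.pi_toCell x.1),
        P.fromCell_toCell x.1 _, x.2, P.toEntry_fromEntry]
    · have hy := y.2
      have hyc : P.π y.1.1 = P.π e.1 := by
        rw [← P.pi_glueEnt nbf hlf hmf G y.1, hy]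
      exact (P.fromEntry_eq (hy.symm.trans
        (P.glueEnt_eq nbf hlf hmf G y.1 (P.π e.1) hyc))).symm
    · intro x
      exact Subtype.ext (P.fromCell_toCell x.1 _)
    · intro y
      exact Subtype.ext (P.toCell_fromCell _ y.1 _)

end BlockCtx

end AuxSW14

/-! ## Statement 14 (Shoji–Wada, Lemma 4.3)

Let `Λ = \tilde P_{n,r}(m)` and `α = (n₁, …, n_g)` with all `n_b > 0` and
`n₁ + ⋯ + n_g = n`. Then cutting into `p`-blocks gives bijections
(i) `{μ ∈ Λ : α_p(μ) = α} ≃ Λ_{n_1} × ⋯ × Λ_{n_g}`,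
(ii) `{λ ∈ Λ⁺ : α_p(λ) = α} ≃ Λ⁺_{n_1} × ⋯ × Λ⁺_{n_g}`, and
(iii) `T₀^p(λ,μ) ≃ T₀(λ^{[1]},μ^{[1]}) × ⋯ × T₀(λ^{[g]},μ^{[g]})`
for `λ ∈ Λ⁺`, `μ ∈ Λ` with `a_p(λ) = a_p(μ)`. -/

theorem block_decomposition_bijections
    {n r g : ℕ} {m : Fin r → ℕ} (hn : 0 < n) (hr : 0 < r) (hm : ∀ k, 0 < m k)
    (P : BlockCtx r g)
    (alpha : Fin g → ℕ) (hpos : ∀ b, 0 < alpha b) (hsum : ∑ b, alpha b = n) :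
    -- (i)
    Function.Bijective
      (fun (mu : {mu : MultiComp n r m // P.alphaP mu = alpha}) (b : Fin g) =>
        P.restrictTo mu.1 b (alpha b) (congrFun mu.2 b)) ∧
    -- (ii)
    Function.Bijective
      (fun (lam : {lam : MultiComp n r m //
          P.alphaP lam = alpha ∧ lam.IsPartition}) (b : Fin g) =>
        (⟨P.restrictTo lam.1 b (alpha b) (congrFun lam.2.1 b),
          P.restrictTo_isPartition lam.1 lam.2.2 b (alpha b)
            (congrFun lam.2.1 b)⟩ :
          {x : MultiComp (alpha b) (P.rblk b) (P.mblk m b) // x.IsPartition})) ∧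
    -- (iii): for `λ ∈ Λ⁺` and `μ ∈ Λ` with `a_p(λ) = a_p(μ)` (equivalently
    -- `α_p(λ) = α_p(μ)`), restriction of entries to the blocks is a bijection
    -- from `T₀^p(λ,μ) = T₀(λ,μ)` onto the product of the `T₀(λ^{[b]},μ^{[b]})`
    (∀ (lam mu : MultiComp n r m), lam.IsPartition →
      P.aP lam = P.aP mu →
      ∃ halpha : P.alphaP mu = P.alphaP lam,
      ∃ F : SSTab lam mu ≃ ((b : Fin g) →
          SSTab (P.restrictTo lam b (P.alphaP lam b) rfl)
            (P.restrictTo mu b (P.alphaP lam b) (congrFun halpha b))),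
        ∀ (T : SSTab lam mu) (b : Fin g)
          (c : (P.restrictTo lam b (P.alphaP lam b) rfl).Cell),
          (((P.blkEquiv b ((F T b).entry c).1 :
              {x // x ∈ Finset.univ.filter fun k => P.π k = b}) : Fin r) =
            (T.entry ⟨((P.blkEquiv b c.1 :
              {x // x ∈ Finset.univ.filter fun k => P.π k = b}) : Fin r),
              c.2.1, c.2.2⟩).1) ∧
          ((((F T b).entry c).2 : ℕ) =
            ((T.entry ⟨((P.blkEquiv b c.1 :
              {x // x ∈ Finset.univ.filter fun k => P.π k = b}) : Fin r),
              c.2.1, c.2.2⟩).2 : ℕ))) := by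
    classical
  refine ⟨⟨?_, ?_⟩, ⟨?_, ?_⟩, ?_⟩
  · -- (i) injectivity
    rintro ⟨mu1, h1⟩ ⟨mu2, h2⟩ h
    apply Subtype.ext
    exact P.restrict_inj alpha mu1 mu2 (fun b => congrFun h1 b)
      (fun b => congrFun h2 b) (fun b => congrFun h b)
  · -- (i) surjectivity
    intro f
    refine ⟨⟨P.glueComp alpha hsum f, P.alphaP_glueComp alpha hsum f⟩, ?_⟩
    funext b
    exact P.restrictTo_glueComp alpha hsum f b
  · -- (ii) injectivity
    rintro ⟨lam1, h1, hp1⟩ ⟨lam2, h2, hp2⟩ h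
    apply Subtype.ext
    refine P.restrict_inj alpha lam1 lam2 (fun b => congrFun h1 b)
      (fun b => congrFun h2 b) (fun b => ?_)
    exact congrArg Subtype.val (congrFun h b)
  · -- (ii) surjectivity
    intro f
    refine ⟨⟨P.glueComp alpha hsum (fun b => (f b).1),
      P.alphaP_glueComp alpha hsum _,
      P.glueComp_isPartition alpha hsum _ (fun b => (f b).2)⟩, ?_⟩
    funext b
    exact Subtype.ext (P.restrictTo_glueComp alpha hsum _ b
      (h := congrFun (P.alphaP_glueComp alpha hsum (fun b => (f b).1)) b))
  · -- (iii)
    intro lam mu hpart haP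
    have halpha : P.alphaP mu = P.alphaP lam := P.alphaP_eq_of_aP haP
    have hS := P.S_eq_of_aP lam mu haP
    refine ⟨halpha, ?_⟩
    refine ⟨⟨fun T b => P.restrictTab T (P.pi_entry_eq T hS) b (P.alphaP lam b) rfl
        (congrFun halpha b),
      fun G => P.glueTab (fun b => P.alphaP lam b) (fun b => rfl)
        (fun b => congrFun halpha b) G, ?_, ?_⟩, ?_⟩
    · intro T
      apply SSTab.entry_injective
      funext c
      exact (P.toEntry_fromEntry _ _ _).trans
        (congrArg T.entry (P.toCell_fromCell _ c _))
    · intro G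
      funext b
      apply SSTab.entry_injective
      funext c'
      refine P.fromEntry_eq ?_
      show P.glueEnt (fun b => P.alphaP lam b) (fun b => rfl)
        (fun b => congrFun halpha b) G (P.toCell c') = P.toEntry b ((G b).entry c')
      rw [P.glueEnt_eq (fun b => P.alphaP lam b) (fun b => rfl)
        (fun b => congrFun halpha b) G (P.toCell c') b (P.pi_toCell c'),
        P.fromCell_toCell c' _]
    · intro T b c
      exact ⟨P.coe_blkEquiv_blkIdx _
        (by rw [P.pi_entry_eq T hS]; exact P.pi_toCell c), rfl⟩
end
end
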